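/- arXiv:1601.01086 — 3 statements merged into one kernel-verified Lean document; each statement's English description precedes it below -/
import Mathlib

section
/- Let $G_1$ be a finite simple graph on vertex set $\{1,\ldots,n\}$ and $G_2$ a finite simple graph on vertex set $\{n+1,\ldots,n+m\}$, and assume that $n$ is a free vertex of $G_1$ and $n+m$ is a free vertex of $G_2$. Let $G' = G_1 \cup G_2$ be their disjoint union and $S' = K[x_1,\ldots,x_{n+m},y_1,\ldots,y_{n+m}]$. Then $x_n - x_{n+m}$ does not belong to any minimal prime of $J_{G'}$; in particular, $x_n - x_{n+m}$ is a nonzerodivisor on $S'/J_{G'}$. -/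
set_option linter.unusedSectionVars false


open MvPolynomial

/-- The binomial edge ideal of a simple graph `G` on vertex set `V`, inside the
polynomial ring `K[x_v, y_v : v ∈ V]`, realized as `MvPolynomial (V ⊕ V) K` where
`X (Sum.inl v)` plays the role of `x_v` and `X (Sum.inr v)` the role of `y_v`. -/
noncomputable def binomialEdgeIdeal {V : Type*} (K : Type*) [CommRing K]
    (G : SimpleGraph V) : Ideal (MvPolynomial (V ⊕ V) K) :=
  Ideal.span {f | ∃ i j, G.Adj i j ∧
    f = X (Sum.inl i) * X (Sum.inr j) - X (Sum.inl j) * X (Sum.inr i)}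

/-- A vertex `v` of `G` is a free vertex if its neighborhood induces a complete
subgraph of `G`. -/
def SimpleGraph.IsFreeVertex {V : Type*} (G : SimpleGraph V) (v : V) : Prop :=
  ∀ u w, G.Adj v u → G.Adj v w → u ≠ w → G.Adj u w


namespace BEI

variable {V : Type*}

/-- Monomials: exponent vectors on `V ⊕ V`. -/
abbrev M (V : Type*) := (V ⊕ V) →₀ ℕ

noncomputable def xE (i : V) : M V := Finsupp.single (Sum.inl i) 1
noncomputable def yE (i : V) : M V := Finsupp.single (Sum.inr i) 1

/-- One move along an edge, in arbitrary context. -/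
def Step (G : SimpleGraph V) (γ δ : M V) : Prop :=
  ∃ i j γ₀, G.Adj i j ∧ γ = γ₀ + xE i + yE j ∧ δ = γ₀ + xE j + yE i

/-- Equivalence of monomials generated by moves. -/
def Eqv (G : SimpleGraph V) : M V → M V → Prop := Relation.ReflTransGen (Step G)

theorem Step.symm {G : SimpleGraph V} {γ δ : M V} (h : Step G γ δ) : Step G δ γ := by
  obtain ⟨i, j, γ₀, ha, h1, h2⟩ := h
  exact ⟨j, i, γ₀, ha.symm, h2, h1⟩

theorem Eqv.refl (G : SimpleGraph V) (γ : M V) : Eqv G γ γ := Relation.ReflTransGen.refl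

theorem Eqv.trans {G : SimpleGraph V} {a b c : M V} (h1 : Eqv G a b) (h2 : Eqv G b c) :
    Eqv G a c := Relation.ReflTransGen.trans h1 h2

theorem Eqv.symm {G : SimpleGraph V} {a b : M V} (h : Eqv G a b) : Eqv G b a :=
  by haveI : Std.Symm (Step G) := ⟨fun _ _ hs => hs.symm⟩; exact Std.Symm.symm (r := Relation.ReflTransGen (Step G)) _ _ h

theorem Eqv.single {G : SimpleGraph V} {a b : M V} (h : Step G a b) : Eqv G a b :=
  Relation.ReflTransGen.single h

theorem Step.add_right {G : SimpleGraph V} {a b : M V} (h : Step G a b) (τ : M V) :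
    Step G (a + τ) (b + τ) := by
  obtain ⟨i, j, γ₀, ha, h1, h2⟩ := h
  refine ⟨i, j, γ₀ + τ, ha, ?_, ?_⟩ <;> subst h1 h2 <;> abel

theorem Eqv.add_right {G : SimpleGraph V} {a b : M V} (h : Eqv G a b) (τ : M V) :
    Eqv G (a + τ) (b + τ) := by
  induction h with
  | refl => exact Eqv.refl G _
  | tail _ hs ih => exact ih.trans (Eqv.single (hs.add_right τ))

theorem Eqv.add {G : SimpleGraph V} {a b a' b' : M V} (h : Eqv G a b) (h' : Eqv G a' b') :
    Eqv G (a + a') (b + b') := by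
  refine (h.add_right a').trans ?_
  rw [add_comm b a', add_comm b b']
  exact h'.add_right b

/-- The generating relation for the additive congruence. -/
def cRel (G : SimpleGraph V) : M V → M V → Prop := fun γ δ =>
  ∃ i j, G.Adj i j ∧ γ = xE i + yE j ∧ δ = xE j + yE i

/-- The additive congruence generated by the moves. -/
noncomputable def cCon (G : SimpleGraph V) : AddCon (M V) := addConGen (cRel G)

theorem cCon_iff_eqv (G : SimpleGraph V) (γ δ : M V) : cCon G γ δ ↔ Eqv G γ δ := by
  constructor
  · intro h
    induction h with
    | of x y hxy =>
      obtain ⟨i, j, ha, h1, h2⟩ := hxy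
      exact Eqv.single ⟨i, j, 0, ha, by simp [h1], by simp [h2]⟩
    | refl x => exact Eqv.refl G x
    | symm _ ih => exact ih.symm
    | trans _ _ ih1 ih2 => exact ih1.trans ih2
    | add _ _ ih1 ih2 => exact ih1.add ih2
  · intro h
    induction h with
    | refl => exact (cCon G).refl _
    | tail _ hs ih =>
      refine (cCon G).trans ih ?_
      obtain ⟨i, j, γ₀, ha, h1, h2⟩ := hs
      subst h1 h2
      have : cCon G (xE i + yE j) (xE j + yE i) :=
        AddConGen.Rel.of _ _ ⟨i, j, ha, rfl, rfl⟩
      have h0 := (cCon G).add ((cCon G).refl γ₀) this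
      convert h0 using 1 <;> abel

end BEI

namespace BEI

variable {V : Type*} {K : Type*} [Field K]

abbrev Qt (G : SimpleGraph V) := (cCon G).Quotient

/-- The classifying ring hom. -/
noncomputable def Phi (K : Type*) [Field K] (G : SimpleGraph V) :
    MvPolynomial (V ⊕ V) K →+* AddMonoidAlgebra K (Qt G) :=
  AddMonoidAlgebra.mapDomainRingHom K (cCon G).mk'

theorem Phi_monomial (G : SimpleGraph V) (γ : M V) (c : K) :
    Phi K G (monomial γ c) = AddMonoidAlgebra.single ((cCon G).mk' γ) c := by
  show AddMonoidAlgebra.mapDomain _ (AddMonoidAlgebra.single γ c) = _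
  rw [AddMonoidAlgebra.mapDomain_single]

theorem mk'_eq_iff (G : SimpleGraph V) {γ δ : M V} :
    (cCon G).mk' γ = (cCon G).mk' δ ↔ Eqv G γ δ := by
  rw [show (cCon G).mk' γ = (γ : Qt G) from rfl, show (cCon G).mk' δ = (δ : Qt G) from rfl,
    AddCon.eq, cCon_iff_eqv]

theorem X_mul_X (i j : V) :
    (X (Sum.inl i) * X (Sum.inr j) : MvPolynomial (V ⊕ V) K) = monomial (xE i + yE j) 1 := by
  rw [X, X, monomial_mul, one_mul]; rfl

theorem eqv_mem {G : SimpleGraph V} {γ δ : M V} (h : Eqv G γ δ) :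
    (monomial γ 1 - monomial δ 1 : MvPolynomial (V ⊕ V) K) ∈ binomialEdgeIdeal K G := by
  induction h with
  | refl => simp
  | tail _ hs ih =>
    rename_i b c _
    have hbc : (monomial b 1 - monomial c 1 : MvPolynomial (V ⊕ V) K) ∈ binomialEdgeIdeal K G := by
      obtain ⟨i, j, γ₀, ha, h1, h2⟩ := hs
      subst h1 h2
      have hgen : (X (Sum.inl i) * X (Sum.inr j) - X (Sum.inl j) * X (Sum.inr i) :
          MvPolynomial (V ⊕ V) K) ∈ binomialEdgeIdeal K G :=
        Ideal.subset_span ⟨i, j, ha, rfl⟩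
      have := Ideal.mul_mem_left _ (monomial γ₀ 1) hgen
      convert this using 1
      rw [X_mul_X, X_mul_X, mul_sub, monomial_mul, monomial_mul, one_mul]
      congr 1 <;> congr 1 <;> abel
    have := Ideal.add_mem _ ih hbc
    convert this using 1; abel

theorem J_le_ker (G : SimpleGraph V) :
    binomialEdgeIdeal K G ≤ RingHom.ker (Phi K G) := by
  rw [binomialEdgeIdeal, Ideal.span_le]
  rintro f ⟨i, j, ha, rfl⟩
  have : Eqv G (xE i + yE j) (xE j + yE i) :=
    (cCon_iff_eqv G _ _).1 (AddConGen.Rel.of _ _ ⟨i, j, ha, rfl, rfl⟩)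
  simp only [SetLike.mem_coe, RingHom.mem_ker, map_sub, X_mul_X, Phi_monomial]
  rw [(mk'_eq_iff G).2 this, sub_self]

/-- Fiber-sum formula for `mapDomain`. -/
theorem mapDomain_apply_fiber {α β : Type*} [DecidableEq β] (f : α → β) (p : α →₀ K) (b : β) :
    Finsupp.mapDomain f p b = ∑ a ∈ p.support, if f a = b then p a else 0 := by
  rw [Finsupp.mapDomain, Finsupp.sum_apply, Finsupp.sum]
  refine Finset.sum_congr rfl fun a _ => ?_
  rw [Finsupp.single_apply]

theorem Phi_apply_fiber (G : SimpleGraph V) [DecidableEq (Qt G)] (p : MvPolynomial (V ⊕ V) K)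
    (q : Qt G) :
    (Phi K G p).coeff q = ∑ a ∈ p.support, if (cCon G).mk' a = q then p.coeff a else 0 :=
  mapDomain_apply_fiber _ _ _

theorem ker_le_J (G : SimpleGraph V) (p : MvPolynomial (V ⊕ V) K)
    (hp : Phi K G p = 0) : p ∈ binomialEdgeIdeal K G := by
  classical
  have H : ∀ (n : ℕ) (p : MvPolynomial (V ⊕ V) K), p.support.card = n →
      Phi K G p = 0 → p ∈ binomialEdgeIdeal K G := by
    intro n
    induction n using Nat.strong_induction_on with
    | _ n ih =>
    intro p hcard hp
    by_cases h0 : p = 0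
    · simp [h0]
    obtain ⟨α, hα⟩ := Finsupp.support_nonempty_iff.2 (mt AddMonoidAlgebra.coeff_eq_zero.1 h0)
    have hfib : ∑ a ∈ p.support, (if (cCon G).mk' a = (cCon G).mk' α then p.coeff a else 0)
        = 0 := by
      rw [← Phi_apply_fiber G p ((cCon G).mk' α), hp]; rfl
    have hex : ∃ β ∈ p.support, β ≠ α ∧ Eqv G β α := by
      by_contra hc
      push_neg at hc
      have : ∑ a ∈ p.support, (if (cCon G).mk' a = (cCon G).mk' α then p.coeff a else 0)
          = p.coeff α := by
        rw [Finset.sum_eq_single α]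
        · simp
        · intro b hb hne
          rw [if_neg]
          intro he
          exact (hc b hb hne ((mk'_eq_iff G).1 he)).elim
        · intro h; exact absurd hα h
      rw [this] at hfib
      exact (Finsupp.mem_support_iff.1 hα) hfib
    obtain ⟨β, hβ, hβne, hβe⟩ := hex
    set d : MvPolynomial (V ⊕ V) K := monomial β (p.coeff β) - monomial α (p.coeff β) with hd
    have hdJ : d ∈ binomialEdgeIdeal K G := by
      have := eqv_mem (K := K) hβe
      have h2 := Ideal.mul_mem_left _ (C (p.coeff β)) this
      rw [mul_sub, C_mul_monomial, C_mul_monomial, mul_one] at h2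
      exact h2
    have hsupp : (p - d).support ⊆ p.support.erase β := by
      intro γ hγ
      rw [Finset.mem_erase]
      have hγs : γ ∈ p.support := by
        by_contra hγn
        rw [MvPolynomial.mem_support_iff] at hγ
        apply hγ
        rw [MvPolynomial.coeff_sub, MvPolynomial.notMem_support_iff.1 hγn, hd]
        rw [MvPolynomial.coeff_sub, MvPolynomial.coeff_monomial, MvPolynomial.coeff_monomial]
        have h1 : γ ≠ β := fun h => hγn (h ▸ hβ)
        have h2 : γ ≠ α := fun h => hγn (h ▸ hα)
        simp [Ne.symm h1, Ne.symm h2]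
      refine ⟨?_, hγs⟩
      intro hgb
      subst hgb
      rw [MvPolynomial.mem_support_iff] at hγ
      apply hγ
      rw [MvPolynomial.coeff_sub, hd, MvPolynomial.coeff_sub, MvPolynomial.coeff_monomial,
        MvPolynomial.coeff_monomial, if_pos rfl, if_neg (Ne.symm hβne)]
      ring
    have hcard' : (p - d).support.card < n := by
      calc (p - d).support.card ≤ (p.support.erase β).card := Finset.card_le_card hsupp
      _ < p.support.card := Finset.card_erase_lt_of_mem hβ
      _ = n := hcard
    have hp' : Phi K G (p - d) = 0 := by
      rw [map_sub, hp, zero_sub, neg_eq_zero]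
      exact J_le_ker G hdJ
    have := ih _ hcard' (p - d) rfl hp'
    have := Ideal.add_mem _ this hdJ
    simpa using this
  exact H _ p rfl hp

theorem mem_J_iff (G : SimpleGraph V) (p : MvPolynomial (V ⊕ V) K) :
    p ∈ binomialEdgeIdeal K G ↔ Phi K G p = 0 :=
  ⟨fun h => J_le_ker G h, ker_le_J G p⟩

end BEI

namespace BEI

variable {V : Type*} {K : Type*} [Field K]

theorem single_one_mul_eq_mapDomain {Q : Type*} [AddCommMonoid Q] (a : Q)
    (F : AddMonoidAlgebra K Q) :
    AddMonoidAlgebra.single a (1 : K) * F = AddMonoidAlgebra.mapDomain (fun q => a + q) F := by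
  induction F using AddMonoidAlgebra.induction with
  | zero => simp
  | single_add q c F hq hc ih =>
    rw [mul_add, ih, AddMonoidAlgebra.mapDomain_add]
    congr 1
    rw [AddMonoidAlgebra.mapDomain_single]
    exact (AddMonoidAlgebra.single_mul_single _ _ _ _).trans (by rw [one_mul])

/-- Cancellation of the class of a monomial implies the colon property. -/
theorem colon_of_cancel {G : SimpleGraph V} {w : V ⊕ V}
    (hc : ∀ γ δ : M V, Eqv G (γ + Finsupp.single w 1) (δ + Finsupp.single w 1) → Eqv G γ δ)
    {g : MvPolynomial (V ⊕ V) K} (hg : X w * g ∈ binomialEdgeIdeal K G) :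
    g ∈ binomialEdgeIdeal K G := by
  rw [mem_J_iff] at hg ⊢
  rw [map_mul] at hg
  have hX : Phi K G (X w) = AddMonoidAlgebra.single ((cCon G).mk' (Finsupp.single w 1)) 1 := by
    rw [X, Phi_monomial]
  rw [hX, single_one_mul_eq_mapDomain] at hg
  have hinj : Function.Injective
      (fun q => (cCon G).mk' (Finsupp.single w 1) + q : Qt G → Qt G) := by
    intro q r h
    obtain ⟨γ, rfl⟩ := AddCon.mk'_surjective q
    obtain ⟨δ, rfl⟩ := AddCon.mk'_surjective r
    have : (cCon G).mk' (Finsupp.single w 1 + γ) = (cCon G).mk' (Finsupp.single w 1 + δ) := by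
      simpa [map_add] using h
    rw [mk'_eq_iff] at this
    rw [mk'_eq_iff]
    exact hc γ δ (by rwa [add_comm γ _, add_comm δ _])
  exact AddMonoidAlgebra.mapDomain_injective hinj (by simpa using hg)

/-- The colon property implies cancellation of the class. -/
theorem cancel_of_colon {G : SimpleGraph V} {w : V ⊕ V}
    (hcol : ∀ g : MvPolynomial (V ⊕ V) K, X w * g ∈ binomialEdgeIdeal K G →
      g ∈ binomialEdgeIdeal K G)
    {γ δ : M V} (h : Eqv G (γ + Finsupp.single w 1) (δ + Finsupp.single w 1)) : Eqv G γ δ := by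
  have hmem : (monomial (γ + Finsupp.single w 1) 1 - monomial (δ + Finsupp.single w 1) 1 :
      MvPolynomial (V ⊕ V) K) ∈ binomialEdgeIdeal K G := eqv_mem h
  have heq : (monomial (γ + Finsupp.single w 1) 1 - monomial (δ + Finsupp.single w 1) 1 :
      MvPolynomial (V ⊕ V) K) = X w * (monomial γ 1 - monomial δ 1) := by
    rw [mul_sub, X, monomial_mul, monomial_mul, one_mul]
    congr 2 <;> abel
  rw [heq] at hmem
  have := hcol _ hmem
  rw [mem_J_iff, map_sub, Phi_monomial, Phi_monomial, sub_eq_zero] at this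
  have hs := AddMonoidAlgebra.single_left_injective (one_ne_zero (α := K)) this
  exact (mk'_eq_iff G).1 hs

end BEI

namespace BEI

variable {V : Type*} [DecidableEq V] {K : Type*} [Field K]

@[simp] theorem xE_apply_inl (i k : V) : xE i (Sum.inl k) = if i = k then 1 else 0 := by
  rw [xE, Finsupp.single_apply]; simp

@[simp] theorem xE_apply_inr (i k : V) : xE i (Sum.inr k) = 0 := by
  rw [xE, Finsupp.single_apply]; simp

@[simp] theorem yE_apply_inl (i k : V) : yE i (Sum.inl k) = 0 := by
  rw [yE, Finsupp.single_apply]; simp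

@[simp] theorem yE_apply_inr (i k : V) : yE i (Sum.inr k) = if i = k then 1 else 0 := by
  rw [yE, Finsupp.single_apply]; simp

theorem sub_single_add (γ : M V) (w : V ⊕ V) (h : 1 ≤ γ w) :
    (γ - Finsupp.single w 1) + Finsupp.single w 1 = γ := by
  ext w'
  rw [Finsupp.add_apply, Finsupp.tsub_apply, Finsupp.single_apply]
  by_cases hw : w = w'
  · subst hw; simp at h ⊢; omega
  · simp [hw]

theorem exists_decomp2 (γ : M V) {w₁ w₂ : V ⊕ V} (hne : w₁ ≠ w₂) (h₁ : 1 ≤ γ w₁)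
    (h₂ : 1 ≤ γ w₂) :
    ∃ γ₀ : M V, γ = γ₀ + Finsupp.single w₁ 1 + Finsupp.single w₂ 1 := by
  refine ⟨(γ - Finsupp.single w₁ 1) - Finsupp.single w₂ 1, ?_⟩
  ext w
  simp only [Finsupp.add_apply, Finsupp.tsub_apply, Finsupp.single_apply]
  by_cases e1 : w₁ = w <;> by_cases e2 : w₂ = w
  · exact absurd (e1.trans e2.symm) hne
  all_goals simp only [if_pos, if_neg, e1, e2] <;> simp_all <;> omega

/-- Neighbour-or-equal relation. -/
def nbr (G : SimpleGraph V) (i j : V) : Prop := i = j ∨ G.Adj i j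

theorem nbr_refl (G : SimpleGraph V) (i : V) : nbr G i i := Or.inl rfl

theorem nbr_symm {G : SimpleGraph V} {i j : V} (h : nbr G i j) : nbr G j i := by
  rcases h with h | h
  · exact Or.inl h.symm
  · exact Or.inr h.symm

theorem nbr_trans {G : SimpleGraph V} (hfree : ∀ v, G.IsFreeVertex v) {i j k : V}
    (h1 : nbr G i j) (h2 : nbr G j k) : nbr G i k := by
  rcases h1 with rfl | h1
  · exact h2
  rcases h2 with rfl | h2
  · exact Or.inr h1
  by_cases hik : i = k
  · exact Or.inl hik
  · exact Or.inr (hfree j i k h1.symm h2 hik)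

section Invariants

variable [Fintype V]

open scoped Classical in
/-- Total degree at vertex `i`. -/
noncomputable def dInv (γ : M V) (i : V) : ℕ := γ (Sum.inl i) + γ (Sum.inr i)

open scoped Classical in
/-- Total `x`-degree on the neighbour class of `i`. -/
noncomputable def xcls (G : SimpleGraph V) (γ : M V) (i : V) : ℕ :=
  ∑ j : V, if nbr G j i then γ (Sum.inl j) else 0

open scoped Classical in
noncomputable def dist (γ δ : M V) : ℕ :=
  ∑ i : V, ((γ (Sum.inl i) - δ (Sum.inl i)) + (δ (Sum.inl i) - γ (Sum.inl i)))

theorem step_dInv {G : SimpleGraph V} {γ δ : M V} (h : Step G γ δ) (k : V) :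
    dInv γ k = dInv δ k := by
  obtain ⟨i, j, γ₀, ha, rfl, rfl⟩ := h
  simp only [dInv, Finsupp.add_apply, xE_apply_inl, xE_apply_inr, yE_apply_inl, yE_apply_inr]
  omega

theorem step_xcls {G : SimpleGraph V} (hfree : ∀ v, G.IsFreeVertex v) {γ δ : M V}
    (h : Step G γ δ) (k : V) : xcls G γ k = xcls G δ k := by
  classical
  obtain ⟨i, j, γ₀, ha, rfl, rfl⟩ := h
  have hnij : nbr G i k ↔ nbr G j k :=
    ⟨fun hl => nbr_trans hfree (Or.inr ha.symm) hl, fun hl => nbr_trans hfree (Or.inr ha) hl⟩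
  have key : ∀ a : V, (∑ l : V, if nbr G l k then γ₀ (Sum.inl l) + (if a = l then 1 else 0)
      else 0) = (∑ l : V, if nbr G l k then γ₀ (Sum.inl l) else 0) +
      (if nbr G a k then 1 else 0) := by
    intro a
    have h1 : ∀ l : V, (if nbr G l k then γ₀ (Sum.inl l) + (if a = l then 1 else 0) else 0)
        = (if nbr G l k then γ₀ (Sum.inl l) else 0) +
          (if nbr G l k then (if a = l then 1 else 0) else 0) := by
      intro l; split <;> simp
    rw [Finset.sum_congr rfl fun l _ => h1 l, Finset.sum_add_distrib]
    congr 1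
    rw [Finset.sum_eq_single_of_mem a (Finset.mem_univ a)]
    · simp
    · intro l _ hl
      simp [Ne.symm hl]
  simp only [xcls, Finsupp.add_apply, xE_apply_inl, yE_apply_inl, add_zero]
  rw [key i, key j, hnij]

end Invariants

end BEI

namespace BEI
variable {V : Type*} [DecidableEq V] [Fintype V]

open scoped Classical in
theorem sum_nbr_split (G : SimpleGraph V) (k a : V) (f : V → ℕ) :
    (∑ l : V, if nbr G l k then f l + (if a = l then 1 else 0) else 0) =
    (∑ l : V, if nbr G l k then f l else 0) + (if nbr G a k then 1 else 0) := by
  have h1 : ∀ l : V, (if nbr G l k then f l + (if a = l then 1 else 0) else 0)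
      = (if nbr G l k then f l else 0) + (if nbr G l k then (if a = l then 1 else 0) else 0) := by
    intro l; split <;> simp
  rw [Finset.sum_congr rfl fun l _ => h1 l, Finset.sum_add_distrib]
  congr 1
  rw [Finset.sum_eq_single_of_mem a (Finset.mem_univ a)]
  · simp
  · intro l _ hl
    simp [Ne.symm hl]

end BEI

namespace BEI

variable {V : Type*} [DecidableEq V] [Fintype V] {K : Type*} [Field K]

theorem eqv_dInv {G : SimpleGraph V} {γ δ : M V} (h : Eqv G γ δ) (k : V) :
    dInv γ k = dInv δ k := by
  induction h with
  | refl => rfl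
  | tail _ hs ih => exact ih.trans (step_dInv hs k)

theorem eqv_xcls {G : SimpleGraph V} (hfree : ∀ v, G.IsFreeVertex v) {γ δ : M V}
    (h : Eqv G γ δ) (k : V) : xcls G γ k = xcls G δ k := by
  induction h with
  | refl => rfl
  | tail _ hs ih => exact ih.trans (step_xcls hfree hs k)

theorem dist_comm' (γ δ : M V) : dist γ δ = dist δ γ := by
  rw [dist, dist]
  exact Finset.sum_congr rfl fun k _ => add_comm _ _

theorem exists_lower {G : SimpleGraph V} {γ δ : M V} {i : V}
    (hx : xcls G γ i = xcls G δ i) (hi : δ (Sum.inl i) < γ (Sum.inl i)) :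
    ∃ j, nbr G j i ∧ γ (Sum.inl j) < δ (Sum.inl j) := by
  classical
  by_contra hc
  push_neg at hc
  have : xcls G δ i < xcls G γ i := by
    rw [xcls, xcls]
    refine Finset.sum_lt_sum (fun l _ => ?_) ⟨i, Finset.mem_univ i, ?_⟩
    · by_cases hn : nbr G l i
      · simp only [if_pos hn]; exact hc l hn
      · simp [hn]
    · simp only [if_pos (nbr_refl G i)]; exact hi
  omega

theorem step_towards {G : SimpleGraph V} {γ δ : M V} {i : V}
    (hd : ∀ k, dInv γ k = dInv δ k) (hx : ∀ k, xcls G γ k = xcls G δ k)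
    (hi : δ (Sum.inl i) < γ (Sum.inl i)) :
    ∃ γ', Step G γ γ' ∧ dist γ' δ < dist γ δ := by
  classical
  obtain ⟨j, hnj, hj⟩ := exists_lower (hx i) hi
  have hij : j ≠ i := by intro h; rw [h] at hj; omega
  have hadj : G.Adj i j := ((hnj.resolve_left hij)).symm
  have hyj : 1 ≤ γ (Sum.inr j) := by
    have := hd j
    rw [dInv, dInv] at this
    omega
  have hxi : 1 ≤ γ (Sum.inl i) := by omega
  obtain ⟨γ₀, hrec⟩ := exists_decomp2 γ (w₁ := Sum.inl i) (w₂ := Sum.inr j)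
    (by simp) hxi hyj
  rw [show (Finsupp.single (Sum.inl i) 1 : M V) = xE i from rfl,
    show (Finsupp.single (Sum.inr j) 1 : M V) = yE j from rfl] at hrec
  refine ⟨γ₀ + xE j + yE i, ⟨i, j, γ₀, hadj, hrec, rfl⟩, ?_⟩
  have hci : ∀ k, (γ₀ + xE j + yE i) (Sum.inl k) = γ₀ (Sum.inl k) + (if j = k then 1 else 0) := by
    intro k; simp [Finsupp.add_apply]
  have hci' : ∀ k, γ (Sum.inl k) = γ₀ (Sum.inl k) + (if i = k then 1 else 0) := by
    intro k; rw [hrec]; simp [Finsupp.add_apply]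
  have hii := hci' i
  have hijj := hci' j
  rw [if_pos rfl] at hii
  rw [if_neg hij.symm, add_zero] at hijj
  rw [dist, dist]
  refine Finset.sum_lt_sum (fun k _ => ?_) ⟨i, Finset.mem_univ i, ?_⟩
  · rw [hci k, hci' k]
    by_cases hik : i = k
    · subst hik
      rw [if_neg hij, if_pos rfl, add_zero]
      omega
    · by_cases hjk : j = k
      · subst hjk
        rw [if_pos rfl, if_neg hik, add_zero]
        omega
      · rw [if_neg hjk, if_neg hik]
  · rw [hci i, hci' i, if_neg hij, if_pos rfl, add_zero]
    omega

theorem eqv_of_inv {G : SimpleGraph V} (hfree : ∀ v, G.IsFreeVertex v) (γ δ : M V)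
    (hd : ∀ k, dInv γ k = dInv δ k) (hx : ∀ k, xcls G γ k = xcls G δ k) : Eqv G γ δ := by
  classical
  have H : ∀ (n : ℕ) (γ δ : M V), dist γ δ = n → (∀ k, dInv γ k = dInv δ k) →
      (∀ k, xcls G γ k = xcls G δ k) → Eqv G γ δ := by
    intro n
    induction n using Nat.strong_induction_on with
    | _ n ih =>
    intro γ δ hn hd hx
    by_cases heq : ∀ i, γ (Sum.inl i) = δ (Sum.inl i)
    · have : γ = δ := by
        ext w
        cases w with
        | inl i => exact heq i
        | inr i =>
          have h1 := hd i
          rw [dInv, dInv] at h1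
          have h2 := heq i
          omega
      rw [this]
      exact Eqv.refl G δ
    · push_neg at heq
      obtain ⟨i, hne⟩ := heq
      rcases Nat.lt_or_ge (δ (Sum.inl i)) (γ (Sum.inl i)) with hlt | hge
      · obtain ⟨γ', hstep, hdist⟩ := step_towards hd hx hlt
        have hd' : ∀ k, dInv γ' k = dInv δ k := fun k => (step_dInv hstep k).symm.trans (hd k)
        have hx' : ∀ k, xcls G γ' k = xcls G δ k := fun k =>
          (step_xcls hfree hstep k).symm.trans (hx k)
        rw [hn] at hdist
        exact (Eqv.single hstep).trans (ih _ hdist γ' δ rfl hd' hx')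
      · have hlt : γ (Sum.inl i) < δ (Sum.inl i) := by omega
        obtain ⟨δ', hstep, hdist⟩ := step_towards (fun k => (hd k).symm)
          (fun k => (hx k).symm) hlt
        have hd' : ∀ k, dInv γ k = dInv δ' k := fun k => (hd k).trans (step_dInv hstep k)
        have hx' : ∀ k, xcls G γ k = xcls G δ' k := fun k =>
          (hx k).trans (step_xcls hfree hstep k)
        have hdist' : dist γ δ' < n := by
          rw [← hn, dist_comm' γ δ', dist_comm' γ δ]
          exact hdist
        exact (ih _ hdist' γ δ' rfl hd' hx').trans (Eqv.single hstep.symm)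
  exact H _ γ δ rfl hd hx

/-- Cancellation in a graph all of whose vertices are free. -/
theorem allfree_cancel {G : SimpleGraph V} (hfree : ∀ v, G.IsFreeVertex v) (v : V)
    {γ δ : M V} (h : Eqv G (γ + Finsupp.single (Sum.inl v) 1) (δ + Finsupp.single (Sum.inl v) 1)) :
    Eqv G γ δ := by
  classical
  have hone : ∀ (ρ : M V) (w : V ⊕ V),
      ((ρ + Finsupp.single (Sum.inl v) 1 : M V)) w = ρ w + (if Sum.inl v = w then 1 else 0) := by
    intro ρ w
    rw [Finsupp.add_apply, Finsupp.single_apply]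
  refine eqv_of_inv hfree γ δ (fun k => ?_) (fun k => ?_)
  · have hk := eqv_dInv h k
    simp only [dInv, hone] at hk
    rw [dInv, dInv]
    by_cases hvk : v = k
    · subst hvk
      simp only [if_pos rfl] at hk
      have : (Sum.inl v ≠ (Sum.inr v : V ⊕ V)) := by simp
      rw [if_neg this] at hk
      omega
    · rw [if_neg (by simp [hvk] : Sum.inl v ≠ (Sum.inl k : V ⊕ V)),
        if_neg (by simp : Sum.inl v ≠ (Sum.inr k : V ⊕ V))] at hk
      omega
  · have hk := eqv_xcls hfree h k
    simp only [xcls, hone] at hk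
    have hiff : ∀ l : V, ((Sum.inl v = (Sum.inl l : V ⊕ V)) ↔ v = l) := by simp
    have hrw : ∀ (ρ : M V), (∑ l : V, if nbr G l k then
        ρ (Sum.inl l) + (if Sum.inl v = (Sum.inl l : V ⊕ V) then 1 else 0) else 0) =
        (∑ l : V, if nbr G l k then ρ (Sum.inl l) + (if v = l then 1 else 0) else 0) := by
      intro ρ
      refine Finset.sum_congr rfl fun l _ => ?_
      rw [if_congr (hiff l) rfl rfl]
    rw [hrw, hrw, sum_nbr_split, sum_nbr_split] at hk
    rw [xcls, xcls]
    omega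

end BEI

namespace BEI

variable {V : Type*} [DecidableEq V] {K : Type*} [Field K]

/-- `G` with all edges at `v` deleted. -/
def Gdel (G : SimpleGraph V) (v : V) : SimpleGraph V where
  Adj i j := G.Adj i j ∧ i ≠ v ∧ j ≠ v
  symm := ⟨fun i j => by rintro ⟨h1, h2, h3⟩; exact ⟨h1.symm, h3, h2⟩⟩
  loopless := ⟨fun i => by rintro ⟨h1, _, _⟩; exact G.loopless.irrefl i h1⟩

/-- `G` with the neighbourhood of `v` completed to a clique. -/
def Gcl (G : SimpleGraph V) (v : V) : SimpleGraph V where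
  Adj i j := G.Adj i j ∨ (i ≠ j ∧ G.Adj v i ∧ G.Adj v j)
  symm := ⟨fun i j => by
    rintro (h | ⟨h1, h2, h3⟩)
    · exact Or.inl h.symm
    · exact Or.inr ⟨h1.symm, h3, h2⟩⟩
  loopless := ⟨fun i => by
    rintro (h | ⟨h1, _, _⟩)
    · exact G.loopless.irrefl i h
    · exact h1 rfl⟩

theorem eqv_mono {G G' : SimpleGraph V} (h : ∀ i j, G.Adj i j → G'.Adj i j)
    {γ δ : M V} (he : Eqv G γ δ) : Eqv G' γ δ := by
  induction he with
  | refl => exact Eqv.refl G' _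
  | tail _ hs ih =>
    obtain ⟨i, j, γ₀, ha, h1, h2⟩ := hs
    exact ih.trans (Eqv.single ⟨i, j, γ₀, h i j ha, h1, h2⟩)

theorem J_mono {G G' : SimpleGraph V} (h : ∀ i j, G.Adj i j → G'.Adj i j) :
    binomialEdgeIdeal K G ≤ binomialEdgeIdeal K G' := by
  rw [binomialEdgeIdeal, Ideal.span_le]
  rintro f ⟨i, j, ha, rfl⟩
  exact Ideal.subset_span ⟨i, j, h i j ha, rfl⟩

theorem exists_decomp1 (γ : M V) {w : V ⊕ V} (h : 1 ≤ γ w) :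
    ∃ γ₀ : M V, γ = γ₀ + Finsupp.single w 1 :=
  ⟨γ - Finsupp.single w 1, (sub_single_add γ w h).symm⟩

/-- A `Gcl`-step at a state with a `v`-token can be simulated by `G`-moves. -/
theorem step_gcl_to_eqv {G : SimpleGraph V} {v : V} {b c : M V}
    (hs : Step (Gcl G v) b c) (hv : 1 ≤ dInv b v) : Eqv G b c := by
  obtain ⟨i, j, γ₀, ha, h1, h2⟩ := hs
  rcases ha with ha | ⟨hne, hvi, hvj⟩
  · exact Eqv.single ⟨i, j, γ₀, ha, h1, h2⟩
  · have hiv : i ≠ v := fun h => G.loopless.irrefl v (h ▸ hvi)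
    have hjv : j ≠ v := fun h => G.loopless.irrefl v (h ▸ hvj)
    have hγ₀v : 1 ≤ dInv γ₀ v := by
      rw [dInv] at hv ⊢
      rw [h1] at hv
      simp only [Finsupp.add_apply, xE_apply_inl, xE_apply_inr, yE_apply_inl, yE_apply_inr,
        if_neg hiv, if_neg hjv] at hv
      omega
    rw [dInv] at hγ₀v
    rcases Nat.lt_or_ge 0 (γ₀ (Sum.inl v)) with hx | hx
    · obtain ⟨γ₁, hγ₁⟩ := exists_decomp1 γ₀ (w := Sum.inl v) hx
      rw [show (Finsupp.single (Sum.inl v) 1 : M V) = xE v from rfl] at hγ₁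
      have e1 : Eqv G b ((γ₁ + xE i) + xE j + yE v) := by
        refine Eqv.single ⟨v, j, γ₁ + xE i, hvj, ?_, rfl⟩
        rw [h1, hγ₁]; abel
      have e2 : Eqv G ((γ₁ + xE i) + xE j + yE v) c := by
        refine Eqv.single ⟨i, v, γ₁ + xE j, (hvi).symm, by abel, ?_⟩
        rw [h2, hγ₁]; abel
      exact e1.trans e2
    · have hy : 1 ≤ γ₀ (Sum.inr v) := by omega
      obtain ⟨γ₁, hγ₁⟩ := exists_decomp1 γ₀ (w := Sum.inr v) hy
      rw [show (Finsupp.single (Sum.inr v) 1 : M V) = yE v from rfl] at hγ₁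
      have e1 : Eqv G b ((γ₁ + yE j) + xE v + yE i) := by
        refine Eqv.single ⟨i, v, γ₁ + yE j, (hvi).symm, ?_, rfl⟩
        rw [h1, hγ₁]; abel
      have e2 : Eqv G ((γ₁ + yE j) + xE v + yE i) c := by
        refine Eqv.single ⟨v, j, γ₁ + yE i, hvj, by abel, ?_⟩
        rw [h2, hγ₁]; abel
      exact e1.trans e2

theorem step_dInv' {G : SimpleGraph V} {γ δ : M V} (h : Step G γ δ) (k : V) :
    dInv γ k = dInv δ k := by
  obtain ⟨i, j, γ₀, ha, rfl, rfl⟩ := h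
  simp only [dInv, Finsupp.add_apply, xE_apply_inl, xE_apply_inr, yE_apply_inl, yE_apply_inr]
  omega

theorem eqv_dInv' {G : SimpleGraph V} {γ δ : M V} (h : Eqv G γ δ) (k : V) :
    dInv γ k = dInv δ k := by
  induction h with
  | refl => rfl
  | tail _ hs ih => exact ih.trans (step_dInv' hs k)

/-- Ohtani's key combinatorial step: `Gcl`-equivalence of monomials with a `v`-token
is already `G`-equivalence. -/
theorem eqv_gcl_to_eqv {G : SimpleGraph V} {v : V} {γ δ : M V}
    (h : Eqv (Gcl G v) γ δ) (hv : 1 ≤ dInv γ v) : Eqv G γ δ := by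
  induction h with
  | refl => exact Eqv.refl G _
  | tail hpre hs ih =>
    refine (ih).trans (step_gcl_to_eqv hs ?_)
    rw [← eqv_dInv' hpre v]
    exact hv

theorem supp_vdeg_of_mem_span {v : V} {r : MvPolynomial (V ⊕ V) K}
    (hr : r ∈ Ideal.span ({X (Sum.inl v), X (Sum.inr v)} : Set (MvPolynomial (V ⊕ V) K)))
    {α : M V} (hα : α ∈ r.support) : 1 ≤ dInv α v := by
  classical
  obtain ⟨f, g, hfg⟩ := Ideal.mem_span_pair.1 hr
  rw [MvPolynomial.mem_support_iff] at hα
  by_contra hc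
  push_neg at hc
  rw [dInv] at hc
  have h1 : α (Sum.inl v) = 0 := by omega
  have h2 : α (Sum.inr v) = 0 := by omega
  apply hα
  rw [← hfg, MvPolynomial.coeff_add, MvPolynomial.coeff_mul_X', MvPolynomial.coeff_mul_X']
  rw [if_neg (by simp [Finsupp.mem_support_iff, h1]), if_neg (by simp [Finsupp.mem_support_iff, h2])]
  simp

/-- Transfer of membership from `J_{Gcl}` to `J_G` for polynomials supported on
monomials with a `v`-token. -/
theorem ohtani_transfer {G : SimpleGraph V} {v : V} {r : MvPolynomial (V ⊕ V) K}
    (hr : r ∈ binomialEdgeIdeal K (Gcl G v))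
    (hsupp : ∀ α ∈ r.support, 1 ≤ dInv α v) : r ∈ binomialEdgeIdeal K G := by
  classical
  rw [mem_J_iff] at hr ⊢
  ext q
  rw [AddMonoidAlgebra.coeff_zero, Finsupp.coe_zero, Pi.zero_apply]
  by_cases hq : ∃ α ∈ r.support, (cCon G).mk' α = q
  · obtain ⟨α₀, hα₀, rfl⟩ := hq
    have h0 : (Phi K (Gcl G v) r).coeff ((cCon (Gcl G v)).mk' α₀) = 0 := by rw [hr]; rfl
    rw [Phi_apply_fiber] at h0
    rw [Phi_apply_fiber]
    refine Eq.trans (Finset.sum_congr rfl fun a ha => ?_) h0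
    refine if_congr ?_ rfl rfl
    rw [mk'_eq_iff, mk'_eq_iff]
    constructor
    · intro he
      exact eqv_mono (fun i j hij => Or.inl hij) he
    · intro he
      exact eqv_gcl_to_eqv he (hsupp a ha)
  · push_neg at hq
    rw [Phi_apply_fiber]
    exact Finset.sum_eq_zero fun a ha => if_neg (hq a ha)

/-- The auxiliary ideal `(x_v, y_v) + J_{G ∖ v}`. -/
noncomputable def Qid (G : SimpleGraph V) (K : Type*) [Field K] (v : V) :
    Ideal (MvPolynomial (V ⊕ V) K) :=
  Ideal.span ({X (Sum.inl v), X (Sum.inr v)} : Set (MvPolynomial (V ⊕ V) K)) ⊔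
    binomialEdgeIdeal K (Gdel G v)

/-- Ohtani's lemma, the hard inclusion. -/
theorem ohtani {G : SimpleGraph V} {v : V} {p : MvPolynomial (V ⊕ V) K}
    (h1 : p ∈ binomialEdgeIdeal K (Gcl G v)) (h2 : p ∈ Qid G K v) :
    p ∈ binomialEdgeIdeal K G := by
  rw [Qid] at h2
  obtain ⟨r, hrmem, q, hqmem, rfl⟩ := Submodule.mem_sup.1 h2
  have hqG : q ∈ binomialEdgeIdeal K G :=
    J_mono (G := Gdel G v) (G' := G) (fun i j hij => hij.1) hqmem
  have hrcl : r ∈ binomialEdgeIdeal K (Gcl G v) := by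
    have hqcl : q ∈ binomialEdgeIdeal K (Gcl G v) :=
      J_mono (G := Gdel G v) (G' := Gcl G v) (fun i j hij => Or.inl hij.1) hqmem
    have := Ideal.sub_mem _ h1 hqcl
    simpa using this
  have hrG : r ∈ binomialEdgeIdeal K G :=
    ohtani_transfer hrcl (fun α hα => supp_vdeg_of_mem_span hrmem hα)
  exact Ideal.add_mem _ hrG hqG

end BEI

namespace BEI

variable {V : Type*} [DecidableEq V] {K : Type*} [Field K]

/-- Substitution killing the `v`-variables. -/
noncomputable def rho (K : Type*) [Field K] (v : V) :
    MvPolynomial (V ⊕ V) K →ₐ[K] MvPolynomial (V ⊕ V) K :=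
  aeval (fun w => if w = Sum.inl v ∨ w = Sum.inr v then 0 else X w)

theorem rho_X_inl (v : V) : rho K v (X (Sum.inl v)) = 0 := by
  rw [rho, aeval_X, if_pos (Or.inl rfl)]

theorem rho_X_inr (v : V) : rho K v (X (Sum.inr v)) = 0 := by
  rw [rho, aeval_X, if_pos (Or.inr rfl)]

theorem rho_X_ne (v : V) {w : V ⊕ V} (h1 : w ≠ Sum.inl v) (h2 : w ≠ Sum.inr v) :
    rho K v (X w) = X w := by
  rw [rho, aeval_X, if_neg (by tauto)]

theorem sub_rho_mem (v : V) (p : MvPolynomial (V ⊕ V) K) :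
    p - rho K v p ∈ Ideal.span ({X (Sum.inl v), X (Sum.inr v)} : Set (MvPolynomial (V ⊕ V) K)) := by
  induction p using MvPolynomial.induction_on with
  | C a =>
    rw [show rho K v (C a) = C a from by rw [rho]; simp]
    simp
  | add p q hp hq =>
    rw [map_add]
    have := Ideal.add_mem _ hp hq
    convert this using 1
    ring
  | mul_X p w hp =>
    rw [map_mul]
    have h1 : p * X w - rho K v p * X w ∈
        Ideal.span ({X (Sum.inl v), X (Sum.inr v)} : Set (MvPolynomial (V ⊕ V) K)) := by
      rw [← sub_mul]
      exact Ideal.mul_mem_right (X w) _ hp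
    by_cases hw : w = Sum.inl v ∨ w = Sum.inr v
    · have h2 : rho K v p * X w - rho K v p * rho K v (X w) ∈
          Ideal.span ({X (Sum.inl v), X (Sum.inr v)} : Set (MvPolynomial (V ⊕ V) K)) := by
        rw [← mul_sub]
        refine Ideal.mul_mem_left _ _ ?_
        rcases hw with hw | hw <;> subst hw
        · rw [rho_X_inl, sub_zero]; exact Ideal.subset_span (Or.inl rfl)
        · rw [rho_X_inr, sub_zero]; exact Ideal.subset_span (Or.inr rfl)
      have := Ideal.add_mem _ h1 h2
      convert this using 1
      ring
    · push_neg at hw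
      rw [rho_X_ne v hw.1 hw.2]
      exact h1

theorem rho_J_del {G : SimpleGraph V} (v : V) {q : MvPolynomial (V ⊕ V) K}
    (hq : q ∈ binomialEdgeIdeal K (Gdel G v)) :
    rho K v q ∈ binomialEdgeIdeal K (Gdel G v) := by
  have hle : binomialEdgeIdeal K (Gdel G v) ≤
      Ideal.comap (rho K v).toRingHom (binomialEdgeIdeal K (Gdel G v)) := by
    rw [binomialEdgeIdeal, Ideal.span_le]
    rintro f ⟨i, j, ha, rfl⟩
    obtain ⟨hij, hiv, hjv⟩ := ha
    simp only [SetLike.mem_coe, Ideal.mem_comap, AlgHom.toRingHom_eq_coe, RingHom.coe_coe,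
      map_sub, map_mul]
    rw [rho_X_ne v (by simp [hiv]) (by simp), rho_X_ne v (by simp) (by simp [hjv]),
      rho_X_ne v (by simp [hjv]) (by simp), rho_X_ne v (by simp) (by simp [hiv])]
    exact Ideal.subset_span ⟨i, j, ⟨hij, hiv, hjv⟩, rfl⟩
  exact hle hq

theorem mem_Qid_of_rho {G : SimpleGraph V} (v : V) {p : MvPolynomial (V ⊕ V) K}
    (h : rho K v p ∈ binomialEdgeIdeal K (Gdel G v)) : p ∈ Qid G K v := by
  have : p = (p - rho K v p) + rho K v p := by ring
  rw [this]
  exact Ideal.add_mem _ (Ideal.mem_sup_left (sub_rho_mem v p)) (Ideal.mem_sup_right h)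

theorem rho_of_mem_Qid {G : SimpleGraph V} (v : V) {p : MvPolynomial (V ⊕ V) K}
    (h : p ∈ Qid G K v) : rho K v p ∈ binomialEdgeIdeal K (Gdel G v) := by
  rw [Qid] at h
  obtain ⟨r, hrmem, q, hqmem, rfl⟩ := Submodule.mem_sup.1 h
  rw [map_add]
  refine Ideal.add_mem _ ?_ (rho_J_del v hqmem)
  obtain ⟨f, g, hfg⟩ := Ideal.mem_span_pair.1 hrmem
  rw [← hfg, map_add, map_mul, map_mul, rho_X_inl, rho_X_inr]
  simp

theorem J_le_Qid {G : SimpleGraph V} (v : V) :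
    binomialEdgeIdeal K G ≤ Qid G K v := by
  rw [binomialEdgeIdeal, Ideal.span_le]
  rintro f ⟨i, j, ha, rfl⟩
  by_cases hiv : i = v
  · subst hiv
    refine Ideal.sub_mem _ ?_ ?_
    · exact Ideal.mem_sup_left (Ideal.mul_mem_right _ _ (Ideal.subset_span (Or.inl rfl)))
    · exact Ideal.mem_sup_left (Ideal.mul_mem_left _ _ (Ideal.subset_span (Or.inr rfl)))
  · by_cases hjv : j = v
    · subst hjv
      refine Ideal.sub_mem _ ?_ ?_
      · exact Ideal.mem_sup_left (Ideal.mul_mem_left _ _ (Ideal.subset_span (Or.inr rfl)))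
      · exact Ideal.mem_sup_left (Ideal.mul_mem_right _ _ (Ideal.subset_span (Or.inl rfl)))
    · exact Ideal.mem_sup_right (Ideal.subset_span ⟨i, j, ⟨ha, hiv, hjv⟩, rfl⟩)

theorem free_Gdel {G : SimpleGraph V} {v₀ : V} (h : G.IsFreeVertex v₀) (v : V) :
    (Gdel G v).IsFreeVertex v₀ := by
  rintro u w ⟨h1, _, huv⟩ ⟨h2, _, hwv⟩ hne
  exact ⟨h u w h1 h2 hne, huv, hwv⟩

theorem free_Gcl {G : SimpleGraph V} {v₀ : V} (h : G.IsFreeVertex v₀) (v : V) :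
    (Gcl G v).IsFreeVertex v₀ := by
  rintro u w hu hw hne
  rcases hu with hu | ⟨_, hvv₀, hvu⟩ <;> rcases hw with hw | ⟨_, hvv₀', hvw⟩
  · exact Or.inl (h u w hu hw hne)
  · -- u old neighbour, w new (so v ~ v₀ and v ~ w)
    by_cases huv : u = v
    · subst huv
      exact Or.inl hvw
    · have hvu : G.Adj v u := (h u v hu hvv₀'.symm huv).symm
      exact Or.inr ⟨hne, hvu, hvw⟩
  · by_cases hwv : w = v
    · subst hwv
      exact Or.inl hvu.symm
    · have hvw : G.Adj v w := (h w v hw hvv₀.symm hwv).symm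
      exact Or.inr ⟨hne, hvu, hvw⟩
  · exact Or.inr ⟨hne, hvu, hvw⟩

section Measure

variable [Fintype V]

noncomputable def mu1 (G : SimpleGraph V) : ℕ := Set.ncard {i : V | ∃ j, G.Adj i j}

noncomputable def mu2 (G : SimpleGraph V) : ℕ :=
  Set.ncard {p : V × V | p.1 ≠ p.2 ∧ ¬ G.Adj p.1 p.2}

noncomputable def mu (G : SimpleGraph V) : ℕ :=
  mu1 G * (Fintype.card (V × V) + 1) + mu2 G

theorem mu2_le (G : SimpleGraph V) : mu2 G ≤ Fintype.card (V × V) := by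
  have h := Set.ncard_le_ncard (Set.subset_univ {p : V × V | p.1 ≠ p.2 ∧ ¬ G.Adj p.1 p.2})
    (Set.toFinite _)
  rwa [Set.ncard_univ, Nat.card_eq_fintype_card] at h

theorem mu_gcl_lt {G : SimpleGraph V} {v : V} (hnf : ¬ G.IsFreeVertex v) :
    mu (Gcl G v) < mu G := by
  rw [SimpleGraph.IsFreeVertex] at hnf
  push_neg at hnf
  obtain ⟨u, w, hu, hw, hne, hnadj⟩ := hnf
  have h1 : mu1 (Gcl G v) = mu1 G := by
    rw [mu1, mu1]
    congr 1
    ext i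
    constructor
    · rintro ⟨j, hj | ⟨_, hvi, hvj⟩⟩
      · exact ⟨j, hj⟩
      · exact ⟨v, hvi.symm⟩
    · rintro ⟨j, hj⟩
      exact ⟨j, Or.inl hj⟩
  have h2 : mu2 (Gcl G v) < mu2 G := by
    rw [mu2, mu2]
    refine Set.ncard_lt_ncard ?_ (Set.toFinite _)
    constructor
    · rintro ⟨a, b⟩ ⟨hab, hnab⟩
      exact ⟨hab, fun hadj => hnab (Or.inl hadj)⟩
    · rw [Set.not_subset]
      refine ⟨(u, w), ⟨hne, hnadj⟩, ?_⟩
      simp only [Set.mem_setOf_eq, not_and, not_not]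
      intro _
      exact Or.inr ⟨hne, hu, hw⟩
  rw [mu, mu, h1]
  omega

theorem mu_gdel_lt {G : SimpleGraph V} {v : V} (hnf : ¬ G.IsFreeVertex v) :
    mu (Gdel G v) < mu G := by
  rw [SimpleGraph.IsFreeVertex] at hnf
  push_neg at hnf
  obtain ⟨u, w, hu, hw, hne, hnadj⟩ := hnf
  have h1 : mu1 (Gdel G v) < mu1 G := by
    rw [mu1, mu1]
    refine Set.ncard_lt_ncard ?_ (Set.toFinite _)
    constructor
    · rintro i ⟨j, hj, _, _⟩
      exact ⟨j, hj⟩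
    · rw [Set.not_subset]
      refine ⟨v, ⟨u, hu⟩, ?_⟩
      simp only [Set.mem_setOf_eq, not_exists]
      rintro j ⟨_, hv, _⟩
      exact hv rfl
  have hb := mu2_le (Gdel G v)
  rw [mu, mu]
  have : mu1 (Gdel G v) + 1 ≤ mu1 G := h1
  calc mu1 (Gdel G v) * (Fintype.card (V × V) + 1) + mu2 (Gdel G v)
      < (mu1 (Gdel G v) + 1) * (Fintype.card (V × V) + 1) := by nlinarith
  _ ≤ mu1 G * (Fintype.card (V × V) + 1) := Nat.mul_le_mul_right _ this
  _ ≤ mu1 G * (Fintype.card (V × V) + 1) + mu2 G := Nat.le_add_right _ _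

end Measure

/-- MAIN LEMMA: for a free vertex `v₀`, `x_{v₀}` is a nonzerodivisor mod `J_G`. -/
theorem colon_free [Fintype V] (G : SimpleGraph V) (v₀ : V) (hfree : G.IsFreeVertex v₀)
    {g : MvPolynomial (V ⊕ V) K} (hg : X (Sum.inl v₀) * g ∈ binomialEdgeIdeal K G) :
    g ∈ binomialEdgeIdeal K G := by
  classical
  have H : ∀ (N : ℕ) (G : SimpleGraph V), mu G ≤ N → ∀ (v₀ : V), G.IsFreeVertex v₀ →
      ∀ g : MvPolynomial (V ⊕ V) K, X (Sum.inl v₀) * g ∈ binomialEdgeIdeal K G →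
      g ∈ binomialEdgeIdeal K G := by
    intro N
    induction N using Nat.strong_induction_on with
    | _ N ih =>
    intro G hmu v₀ hfree g hg
    by_cases hall : ∀ v, G.IsFreeVertex v
    · exact colon_of_cancel (fun γ δ h => allfree_cancel hall v₀ h) hg
    · push_neg at hall
      obtain ⟨v, hnf⟩ := hall
      -- g ∈ J_{Gcl}
      have hgcl : g ∈ binomialEdgeIdeal K (Gcl G v) := by
        have hmem : X (Sum.inl v₀) * g ∈ binomialEdgeIdeal K (Gcl G v) :=
          J_mono (G := G) (G' := Gcl G v) (fun i j hij => Or.inl hij) hg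
        have hlt : mu (Gcl G v) < N := lt_of_lt_of_le (mu_gcl_lt hnf) hmu
        exact ih _ hlt (Gcl G v) le_rfl v₀ (free_Gcl hfree v) g hmem
      -- g ∈ Qid
      have hv₀v : v₀ ≠ v := fun h => hnf (h ▸ hfree)
      have hqid : g ∈ Qid G K v := by
        have hmem : X (Sum.inl v₀) * g ∈ Qid G K v := J_le_Qid v hg
        have hrho : X (Sum.inl v₀) * rho K v g ∈ binomialEdgeIdeal K (Gdel G v) := by
          have := rho_of_mem_Qid v hmem
          rwa [map_mul, rho_X_ne v (by simp [hv₀v]) (by simp)] at this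
        have hlt : mu (Gdel G v) < N := lt_of_lt_of_le (mu_gdel_lt hnf) hmu
        have := ih _ hlt (Gdel G v) le_rfl v₀ (free_Gdel hfree v) (rho K v g) hrho
        exact mem_Qid_of_rho v this
      exact ohtani hgcl hqid
  exact H (mu G) G le_rfl v₀ hfree g hg

end BEI

namespace BEI

variable {V : Type*} [DecidableEq V] {K : Type*} [Field K]

/-- The weight (total degree at vertex `w₀`) additive hom. -/
noncomputable def Wt (w₀ : V) : M V →+ ℕ :=
  Finsupp.applyAddHom (Sum.inl w₀ : V ⊕ V) + Finsupp.applyAddHom (Sum.inr w₀ : V ⊕ V)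

theorem Wt_apply (w₀ : V) (γ : M V) : Wt w₀ γ = γ (Sum.inl w₀) + γ (Sum.inr w₀) := rfl

theorem cCon_le_ker_Wt (G : SimpleGraph V) (w₀ : V) : cCon G ≤ AddCon.ker (Wt w₀) := by
  refine AddCon.addConGen_le.2 ?_
  rintro x y ⟨i, j, ha, rfl, rfl⟩
  rw [AddCon.ker_rel, map_add, map_add, Wt_apply, Wt_apply, Wt_apply, Wt_apply]
  simp only [xE_apply_inl, xE_apply_inr, yE_apply_inl, yE_apply_inr]
  omega

/-- The induced weight on the quotient monoid. -/
noncomputable def Wbar (G : SimpleGraph V) (w₀ : V) : Qt G →+ ℕ :=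
  (cCon G).lift (Wt w₀) (cCon_le_ker_Wt G w₀)

theorem Wbar_mk' (G : SimpleGraph V) (w₀ : V) (γ : M V) :
    Wbar G w₀ ((cCon G).mk' γ) = Wt w₀ γ := AddCon.lift_mk' _ _

/-- The key colon property for the difference of the two `x`-variables. -/
theorem u_colon [Fintype V] (G : SimpleGraph V) (vL vR : V) (hfree : G.IsFreeVertex vL)
    (hne : vR ≠ vL) {g : MvPolynomial (V ⊕ V) K}
    (hg : (X (Sum.inl vL) - X (Sum.inl vR)) * g ∈ binomialEdgeIdeal K G) :
    g ∈ binomialEdgeIdeal K G := by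
  classical
  rw [mem_J_iff] at hg ⊢
  set F := Phi K G g with hF
  set a := (cCon G).mk' (Finsupp.single (Sum.inl vL) 1) with ha
  set b := (cCon G).mk' (Finsupp.single (Sum.inl vR) 1) with hb
  have hXL : Phi K G (X (Sum.inl vL)) = AddMonoidAlgebra.single a 1 := by rw [X, Phi_monomial]
  have hXR : Phi K G (X (Sum.inl vR)) = AddMonoidAlgebra.single b 1 := by rw [X, Phi_monomial]
  rw [map_mul, map_sub, hXL, hXR, sub_mul, sub_eq_zero, ← hF] at hg
  rw [single_one_mul_eq_mapDomain, single_one_mul_eq_mapDomain] at hg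
  -- cancellation of `a`
  have hcanc : ∀ γ δ : M V, Eqv G (γ + Finsupp.single (Sum.inl vL) 1)
      (δ + Finsupp.single (Sum.inl vL) 1) → Eqv G γ δ := fun γ δ h =>
    cancel_of_colon (K := K) (fun g' hg' => colon_free G vL hfree hg') h
  have hinj : ∀ q r : Qt G, a + q = a + r → q = r := by
    intro q r h
    obtain ⟨γ, rfl⟩ := AddCon.mk'_surjective q
    obtain ⟨δ, rfl⟩ := AddCon.mk'_surjective r
    have h2 : (cCon G).mk' (Finsupp.single (Sum.inl vL) 1 + γ) =
        (cCon G).mk' (Finsupp.single (Sum.inl vL) 1 + δ) := by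
      rw [map_add, map_add, ← ha]
      exact h
    rw [mk'_eq_iff] at h2
    rw [mk'_eq_iff]
    exact hcanc γ δ (by rwa [add_comm γ _, add_comm δ _])
  -- weights
  have hWa : Wbar G vL a = 1 := by
    rw [ha, Wbar_mk', Wt_apply]
    rw [Finsupp.single_apply, Finsupp.single_apply, if_pos rfl, if_neg (by simp)]
    rfl
  have hWb : Wbar G vL b = 0 := by
    rw [hb, Wbar_mk', Wt_apply]
    rw [Finsupp.single_apply, Finsupp.single_apply, if_neg (by simp [hne]), if_neg (by simp)]
    rfl
  -- main contradiction argument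
  by_contra hF0
  obtain ⟨q₀, hq₀, hq₀max⟩ := Finset.exists_max_image F.coeff.support (Wbar G vL)
    (Finsupp.support_nonempty_iff.2 (mt AddMonoidAlgebra.coeff_eq_zero.1 hF0))
  have := congrArg (fun F' : AddMonoidAlgebra K (Qt G) => F'.coeff (a + q₀)) hg
  change Finsupp.mapDomain (fun q => a + q) F.coeff (a + q₀) =
    Finsupp.mapDomain (fun q => b + q) F.coeff (a + q₀) at this
  rw [mapDomain_apply_fiber, mapDomain_apply_fiber] at this
  have hL : (∑ q ∈ F.coeff.support, if a + q = a + q₀ then F.coeff q else 0) = F.coeff q₀ := by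
    rw [Finset.sum_eq_single_of_mem q₀ hq₀]
    · rw [if_pos rfl]
    · intro q hq hqne
      rw [if_neg]
      intro he
      exact hqne (hinj q q₀ he)
  have hR : (∑ q ∈ F.coeff.support, if b + q = a + q₀ then F.coeff q else 0) = 0 := by
    refine Finset.sum_eq_zero fun q hq => ?_
    rw [if_neg]
    intro he
    have hW := congrArg (Wbar G vL) he
    rw [map_add, map_add, hWa, hWb] at hW
    have := hq₀max q hq
    omega
  rw [hL, hR] at this
  exact (Finsupp.mem_support_iff.1 hq₀) this

end BEI

namespace BEI

theorem free_sum_inl {α β : Type*} (G₁ : SimpleGraph α) (G₂ : SimpleGraph β) {v : α}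
    (h : G₁.IsFreeVertex v) : (G₁.sum G₂).IsFreeVertex (Sum.inl v) := by
  intro u w hu hw hne
  cases u with
  | inl a =>
    cases w with
    | inl b =>
      have hu' : G₁.Adj v a := hu
      have hw' : G₁.Adj v b := hw
      exact (h a b hu' hw' (by simpa using hne) : G₁.Adj a b)
    | inr b => simp [SimpleGraph.sum] at hw
  | inr a => simp [SimpleGraph.sum] at hu

end BEI


/-- With `G₁` on `{1, …, n}`, `G₂` on `{n+1, …, n+m}`, `n` free in `G₁` and `n+m` free
in `G₂`, the element `x_n - x_{n+m}` lies in no minimal prime of `J_{G'}` where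
`G' = G₁ ⊔ G₂`; in particular it is a nonzerodivisor on `S'/J_{G'}`. -/
theorem x_diff_notMem_minimalPrimes_and_nonZeroDivisor
    {n m : ℕ} (K : Type*) [Field K]
    (G₁ : SimpleGraph (Fin (n + 1))) (G₂ : SimpleGraph (Fin (m + 1)))
    (h₁ : G₁.IsFreeVertex (Fin.last n)) (h₂ : G₂.IsFreeVertex (Fin.last m)) :
    (∀ P ∈ (binomialEdgeIdeal K (G₁.sum G₂)).minimalPrimes,
        X (Sum.inl (Sum.inl (Fin.last n))) - X (Sum.inl (Sum.inr (Fin.last m))) ∉ P) ∧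
    Ideal.Quotient.mk (binomialEdgeIdeal K (G₁.sum G₂))
        (X (Sum.inl (Sum.inl (Fin.last n))) - X (Sum.inl (Sum.inr (Fin.last m)))) ∈
      nonZeroDivisors
        (MvPolynomial ((Fin (n + 1) ⊕ Fin (m + 1)) ⊕ (Fin (n + 1) ⊕ Fin (m + 1))) K ⧸
          binomialEdgeIdeal K (G₁.sum G₂)) := by
  classical
  set G := G₁.sum G₂ with hG
  set J := binomialEdgeIdeal K G with hJ
  set u : MvPolynomial ((Fin (n + 1) ⊕ Fin (m + 1)) ⊕ (Fin (n + 1) ⊕ Fin (m + 1))) K :=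
    X (Sum.inl (Sum.inl (Fin.last n))) - X (Sum.inl (Sum.inr (Fin.last m))) with hu
  have hfree : G.IsFreeVertex (Sum.inl (Fin.last n)) := BEI.free_sum_inl G₁ G₂ h₁
  have hucol : ∀ g, u * g ∈ J → g ∈ J := fun g hg =>
    BEI.u_colon G (Sum.inl (Fin.last n)) (Sum.inr (Fin.last m)) hfree (by simp) hg
  have hnzd : Ideal.Quotient.mk J u ∈ nonZeroDivisors (_ ⧸ J) := by
    rw [mem_nonZeroDivisors_iff_right]
    intro z hz
    obtain ⟨g, rfl⟩ := Ideal.Quotient.mk_surjective z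
    rw [← map_mul, Ideal.Quotient.eq_zero_iff_mem] at hz
    rw [Ideal.Quotient.eq_zero_iff_mem]
    exact hucol g (by rwa [mul_comm] at hz)
  refine ⟨?_, hnzd⟩
  intro P hP huP
  have hPprime : P.IsPrime := hP.1.1
  have hJP : J ≤ P := hP.1.2
  have hone : (1 : MvPolynomial _ K) ∉ P := (Ideal.ne_top_iff_one P).1 hPprime.ne_top
  set T : Submonoid (MvPolynomial ((Fin (n + 1) ⊕ Fin (m + 1)) ⊕ (Fin (n + 1) ⊕ Fin (m + 1))) K) :=
    { carrier := {z | ∃ s k, s ∉ P ∧ z = s * u ^ k}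
      one_mem' := ⟨1, 0, hone, by ring⟩
      mul_mem' := by
        rintro x y ⟨s1, k1, h1, rfl⟩ ⟨s2, k2, h2, rfl⟩
        exact ⟨s1 * s2, k1 + k2,
          fun hm => ((hPprime.mem_or_mem hm).elim h1 h2), by ring⟩ } with hT
  by_cases hdis : Disjoint (J : Set (MvPolynomial ((Fin (n + 1) ⊕ Fin (m + 1)) ⊕ (Fin (n + 1) ⊕ Fin (m + 1))) K)) (T : Set (MvPolynomial ((Fin (n + 1) ⊕ Fin (m + 1)) ⊕ (Fin (n + 1) ⊕ Fin (m + 1))) K))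
  · obtain ⟨Q, hQp, hJQ, hQd⟩ := J.exists_le_prime_disjoint T hdis
    have hQP : Q ≤ P := by
      intro x hx
      by_contra hxP
      exact Set.disjoint_left.1 hQd hx ⟨x, 0, hxP, by ring⟩
    have hPQ : P ≤ Q := hP.2 ⟨hQp, hJQ⟩ hQP
    exact Set.disjoint_left.1 hQd (hPQ huP) ⟨1, 1, hone, by ring⟩
  · rw [Set.not_disjoint_iff] at hdis
    obtain ⟨z, hzJ, s, k, hsP, rfl⟩ := hdis
    have hz0 : (Ideal.Quotient.mk J s) * (Ideal.Quotient.mk J u) ^ k = 0 := by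
      rw [← map_pow, ← map_mul, Ideal.Quotient.eq_zero_iff_mem]
      exact hzJ
    have hs0 : Ideal.Quotient.mk J s = 0 := mem_nonZeroDivisors_iff_right.1 (pow_mem hnzd k) _ hz0
    exact hsP (hJP (Ideal.Quotient.eq_zero_iff_mem.1 hs0))
end

section
/- Let $G_1$ be a finite simple graph on vertex set $\{1,\ldots,n\}$ and $G_2$ a finite simple graph on vertex set $\{n+1,\ldots,n+m\}$, and assume that $n$ is a free vertex of $G_1$ and $n+m$ is a free vertex of $G_2$. Let $G' = G_1 \cup G_2$ be their disjoint union and $S' = K[x_1,\ldots,x_{n+m},y_1,\ldots,y_{n+m}]$. Then for every minimal prime $P$ of $J_{G'}$, the ideal $P + (x_n - x_{n+m})$ is a prime ideal of $S'$. -/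
open MvPolynomial

set_option linter.unusedSectionVars false


open MvPolynomial

namespace BEI

variable {K : Type*} [Field K] {σ W : Type*}

lemma prod_monomial {ι : Type*} (s : Finset ι) (f : ι → (W →₀ ℕ)) :
    (∏ i ∈ s, monomial (f i) (1 : K)) = monomial (∑ i ∈ s, f i) 1 := by
  classical
  induction s using Finset.induction with
  | empty => simp [monomial_eq]
  | insert _ _ hns ih =>
    rw [Finset.prod_insert hns, Finset.sum_insert hns, ih, monomial_mul, one_mul]

variable (bad : σ → Prop) [DecidablePred bad] (E : σ → (W →₀ ℕ))

/-- The exponent of the image of a monomial. -/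
noncomputable def T (d : σ →₀ ℕ) : W →₀ ℕ := d.sum fun z k => k • E z

lemma aeval_monomial_clean (d : σ →₀ ℕ) (hd : ∀ z ∈ d.support, ¬ bad z) (c : K) :
    aeval (fun z => if bad z then (0 : MvPolynomial W K) else monomial (E z) 1)
      (monomial d c) = monomial (T E d) c := by
  rw [aeval_monomial]
  have : (d.prod fun z k => (if bad z then (0 : MvPolynomial W K) else monomial (E z) 1) ^ k)
      = monomial (T E d) 1 := by
    rw [Finsupp.prod]
    have h1 : ∀ z ∈ d.support,
        (if bad z then (0 : MvPolynomial W K) else monomial (E z) 1) ^ d z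
        = monomial (d z • E z) 1 := by
      intro z hz
      rw [if_neg (hd z hz), monomial_pow, one_pow]
    rw [Finset.prod_congr rfl h1, prod_monomial]
    rfl
  rw [this, algebraMap_eq, C_mul_monomial, mul_one]

lemma aeval_monomial_dirty (d : σ →₀ ℕ) (z : σ) (hz : z ∈ d.support) (hb : bad z) (c : K) :
    aeval (fun z => if bad z then (0 : MvPolynomial W K) else monomial (E z) 1)
      (monomial d c) = 0 := by
  rw [aeval_monomial, Finsupp.prod]
  rw [Finset.prod_eq_zero hz (by rw [if_pos hb]; exact zero_pow (Finsupp.mem_support_iff.mp hz)),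
    mul_zero]

lemma monomial_dirty_mem (P : Ideal (MvPolynomial σ K))
    (h1 : ∀ z, bad z → X z ∈ P) (d : σ →₀ ℕ) (z : σ) (hz : z ∈ d.support) (hb : bad z) (c : K) :
    monomial d c ∈ P := by
  have hle : Finsupp.single z 1 ≤ d := by
    rw [Finsupp.single_le_iff]
    exact Nat.one_le_iff_ne_zero.mpr (Finsupp.mem_support_iff.mp hz)
  have : monomial d c = monomial (d - Finsupp.single z 1) c * X z := by
    rw [X, monomial_mul, mul_one, tsub_add_cancel_of_le hle]
  rw [this]
  exact Ideal.mul_mem_left _ _ (h1 z hb)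

end BEI

namespace BEI
variable {K : Type*} [Field K] {σ W : Type*}
variable (bad : σ → Prop) [DecidablePred bad] (E : σ → (W →₀ ℕ))

theorem mem_of_aeval_eq_zero (P : Ideal (MvPolynomial σ K))
    (h1 : ∀ z, bad z → X z ∈ P)
    (h2 : ∀ d d' : σ →₀ ℕ, (∀ z ∈ d.support, ¬ bad z) → (∀ z ∈ d'.support, ¬ bad z) →
      T E d = T E d' → monomial d (1 : K) - monomial d' 1 ∈ P)
    (f : MvPolynomial σ K)
    (hf : aeval (fun z => if bad z then (0 : MvPolynomial W K) else monomial (E z) 1) f = 0) :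
    f ∈ P := by
  classical
  set Φ : MvPolynomial σ K →ₐ[K] MvPolynomial W K := aeval (fun z => if bad z then (0 : MvPolynomial W K) else monomial (E z) 1) with hΦ
  -- key : clean polynomials in the kernel belong to P
  have key : ∀ N : ℕ, ∀ g : MvPolynomial σ K, g.support.card ≤ N →
      (∀ d ∈ g.support, ∀ z ∈ d.support, ¬ bad z) → Φ g = 0 → g ∈ P := by
    intro N
    induction N with
    | zero =>
      intro g hcard _ _
      have : g = 0 := by
        rwa [Nat.le_zero, Finset.card_eq_zero, MvPolynomial.support_eq_empty] at hcard
      simp [this]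
    | succ N ih =>
      intro g hcard hclean hg0
      by_cases hg : g = 0
      · simp [hg]
      · obtain ⟨d₀, hd₀⟩ := (MvPolynomial.support_nonempty.mpr hg)
        set A := g.support.filter (fun d => T E d = T E d₀) with hA
        have hd₀A : d₀ ∈ A := by simp [hA, hd₀]
        -- sum of coefficients over A is zero
        have hΦg : Φ g = ∑ d ∈ g.support, monomial (T E d) (g.coeff d) := by
          conv_lhs => rw [g.as_sum]
          rw [show (Φ (∑ v ∈ g.support, (monomial v) (coeff v g))) = ∑ v ∈ g.support, Φ ((monomial v) (coeff v g)) from map_sum Φ _ _]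
          exact Finset.sum_congr rfl fun d hd =>
            aeval_monomial_clean bad E d (hclean d hd) _
        have hsum : ∑ d ∈ A, g.coeff d = 0 := by
          have h0 : coeff (T E d₀) (Φ g) = 0 := by rw [hg0]; rfl
          rw [hΦg] at h0
          rw [MvPolynomial.coeff_sum] at h0
          rw [Finset.sum_congr rfl (fun d _ => MvPolynomial.coeff_monomial _ _ _)] at h0
          rw [hA, Finset.sum_filter]
          exact h0
        set p : MvPolynomial σ K := ∑ d ∈ A, monomial d (g.coeff d) with hp
        have hΦp : Φ p = 0 := by
          rw [hp, show (Φ (∑ d ∈ A, (monomial d) (coeff d g))) = ∑ d ∈ A, Φ ((monomial d) (coeff d g)) from map_sum Φ _ _]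
          rw [Finset.sum_congr rfl (fun d hd => by
            rw [aeval_monomial_clean bad E d (hclean d (Finset.mem_filter.mp hd).1),
              (Finset.mem_filter.mp hd).2])]
          rw [← map_sum (monomial (T E d₀)), hsum, map_zero]
        have hpP : p ∈ P := by
          have hrw : p = ∑ d ∈ A, C (g.coeff d) * (monomial d (1:K) - monomial d₀ 1) := by
            rw [Finset.sum_congr rfl (fun d (_ : d ∈ A) => by
              rw [mul_sub, C_mul_monomial, C_mul_monomial, mul_one]),
              Finset.sum_sub_distrib]
            have h3 : ∑ d ∈ A, monomial d₀ (g.coeff d) = 0 := by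
              rw [← map_sum (monomial d₀), hsum, map_zero]
            rw [h3, sub_zero]
          rw [hrw]
          exact Ideal.sum_mem _ fun d hd => Ideal.mul_mem_left _ _
            (h2 d d₀ (hclean d (Finset.mem_filter.mp hd).1) (hclean d₀ hd₀)
              (Finset.mem_filter.mp hd).2)
        have hcoeffp : ∀ d, coeff d p = if d ∈ A then coeff d g else 0 := by
          intro d
          rw [hp, MvPolynomial.coeff_sum]
          rw [Finset.sum_congr rfl (fun d' _ => MvPolynomial.coeff_monomial _ _ _)]
          exact Finset.sum_ite_eq' A d (fun d' => coeff d' g)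
        set g' := g - p with hg'def
        have hsupp' : g'.support ⊆ g.support \ A := by
          intro d hd
          rw [MvPolynomial.mem_support_iff] at hd
          rw [hg'def, MvPolynomial.coeff_sub, hcoeffp] at hd
          by_cases hdA : d ∈ A
          · rw [if_pos hdA, sub_self] at hd; exact absurd rfl hd
          · rw [if_neg hdA, sub_zero] at hd
            exact Finset.mem_sdiff.mpr ⟨MvPolynomial.mem_support_iff.mpr hd, hdA⟩
        have hgP : g' ∈ P := by
          apply ih
          · have h4 : A ⊆ g.support := Finset.filter_subset _ _
            calc g'.support.card ≤ (g.support \ A).card := Finset.card_le_card hsupp'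
              _ = g.support.card - A.card := Finset.card_sdiff_of_subset h4
              _ ≤ (N + 1) - 1 :=
                  tsub_le_tsub hcard (Finset.card_pos.mpr ⟨d₀, hd₀A⟩)
              _ = N := rfl
          · intro d hd
            exact hclean d (Finset.mem_sdiff.mp (hsupp' hd)).1
          · rw [hg'def, map_sub, hg0, hΦp, sub_zero]
        have : g = g' + p := by rw [hg'def, sub_add_cancel]
        rw [this]
        exact Ideal.add_mem _ hgP hpP
  -- now decompose f into clean and dirty parts
  have hdec := (Finset.sum_filter_add_sum_filter_not f.support
    (fun d => ∀ z ∈ d.support, ¬ bad z) (fun d => monomial d (f.coeff d)))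
  set fc := ∑ d ∈ f.support.filter (fun d => ∀ z ∈ d.support, ¬ bad z),
    monomial d (f.coeff d) with hfc
  set fd := ∑ d ∈ f.support.filter (fun d => ¬ ∀ z ∈ d.support, ¬ bad z),
    monomial d (f.coeff d) with hfd
  have hf_eq : f = fc + fd := by rw [hfc, hfd, hdec]; exact f.as_sum
  have hfdP : fd ∈ P := by
    apply Ideal.sum_mem
    intro d hd
    obtain ⟨z, hz, hbz⟩ := by
      have := (Finset.mem_filter.mp hd).2
      push_neg at this
      exact this
    exact monomial_dirty_mem bad P h1 d z hz hbz _
  have hΦfd : Φ fd = 0 := by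
    rw [hfd, show (Φ (∑ d ∈ f.support.filter (fun d => ¬ ∀ z ∈ d.support, ¬ bad z), (monomial d) (coeff d f))) = ∑ d ∈ f.support.filter (fun d => ¬ ∀ z ∈ d.support, ¬ bad z), Φ ((monomial d) (coeff d f)) from map_sum Φ _ _]
    apply Finset.sum_eq_zero
    intro d hd
    obtain ⟨z, hz, hbz⟩ := by
      have := (Finset.mem_filter.mp hd).2
      push_neg at this
      exact this
    exact aeval_monomial_dirty bad E d z hz hbz _
  have hfcP : fc ∈ P := by
    apply key fc.support.card fc le_rfl
    · intro d hd
      have h5 := MvPolynomial.support_sum (R := K) (σ := σ)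
        (s := f.support.filter (fun d => ∀ z ∈ d.support, ¬ bad z))
        (f := fun d => monomial d (f.coeff d)) hd
      rw [Finset.mem_biUnion] at h5
      obtain ⟨d', hd', hdd'⟩ := h5
      have h6 := MvPolynomial.support_monomial_subset hdd'
      rw [Finset.mem_singleton] at h6
      subst h6
      exact (Finset.mem_filter.mp hd').2
    · have : Φ f = Φ fc + Φ fd := by rw [hf_eq, map_add]
      rw [hf, hΦfd, add_zero] at this
      exact this.symm
  rw [hf_eq]
  exact Ideal.add_mem _ hfcP hfdP

end BEI

section Graph

open MvPolynomial
namespace BEI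

variable {V : Type*} [Fintype V] [DecidableEq V] {K : Type*} [Field K]

/-- The graph `G` with all vertices in `S` isolated. -/
def delGraph (G : SimpleGraph V) (S : Set V) : SimpleGraph V where
  Adj i j := G.Adj i j ∧ i ∉ S ∧ j ∉ S
  symm := ⟨fun i j ⟨h, hi, hj⟩ => ⟨h.symm, hj, hi⟩⟩
  loopless := ⟨fun i ⟨h, _, _⟩ => G.loopless.irrefl i h⟩

/-- The candidate prime `P_S(G)`. -/
noncomputable def PS (K : Type*) [Field K] (G : SimpleGraph V) (S : Set V) :
    Ideal (MvPolynomial (V ⊕ V) K) :=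
  Ideal.span ({f | ∃ v ∈ S, f = X (Sum.inl v) ∨ f = X (Sum.inr v)} ∪
    {f | ∃ i j, (delGraph G S).Reachable i j ∧
      f = X (Sum.inl i) * X (Sum.inr j) - X (Sum.inl j) * X (Sum.inr i)})

lemma X_inl_mem_PS (G : SimpleGraph V) (S : Set V) {v : V} (hv : v ∈ S) :
    X (Sum.inl v) ∈ PS K G S :=
  Ideal.subset_span (Or.inl ⟨v, hv, Or.inl rfl⟩)

lemma X_inr_mem_PS (G : SimpleGraph V) (S : Set V) {v : V} (hv : v ∈ S) :
    X (Sum.inr v) ∈ PS K G S :=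
  Ideal.subset_span (Or.inl ⟨v, hv, Or.inr rfl⟩)

lemma minor_mem_PS (G : SimpleGraph V) (S : Set V) {i j : V}
    (h : (delGraph G S).Reachable i j) :
    X (Sum.inl i) * X (Sum.inr j) - X (Sum.inl j) * X (Sum.inr i) ∈ PS K G S :=
  Ideal.subset_span (Or.inr ⟨i, j, h, rfl⟩)

lemma J_le_PS (G : SimpleGraph V) (S : Set V) :
    binomialEdgeIdeal K G ≤ PS K G S := by
  rw [binomialEdgeIdeal, Ideal.span_le]
  rintro f ⟨i, j, hadj, rfl⟩
  by_cases hi : i ∈ S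
  · apply Ideal.sub_mem
    · rw [mul_comm]
      exact Ideal.mul_mem_left _ _ (X_inl_mem_PS G S hi)
    · exact Ideal.mul_mem_left _ _ (X_inr_mem_PS G S hi)
  · by_cases hj : j ∈ S
    · apply Ideal.sub_mem
      · exact Ideal.mul_mem_left _ _ (X_inr_mem_PS G S hj)
      · rw [mul_comm]
        exact Ideal.mul_mem_left _ _ (X_inl_mem_PS G S hj)
    · exact minor_mem_PS G S (SimpleGraph.Adj.reachable ⟨hadj, hi, hj⟩)

lemma not_mem_S_of_reachable {G : SimpleGraph V} {S : Set V} {i j : V}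
    (h : (delGraph G S).Reachable i j) (hij : i ≠ j) : i ∉ S := by
  obtain ⟨w⟩ := h
  cases w with
  | nil => exact absurd rfl hij
  | cons h _ => exact h.2.1

open Classical in
/-- Total `x`-degree of a monomial on the vertices of the component `C`. -/
noncomputable def xdeg (G : SimpleGraph V) (S : Set V) (d : (V ⊕ V) →₀ ℕ)
    (C : (delGraph G S).ConnectedComponent) : ℕ :=
  ∑ v : V, if (delGraph G S).connectedComponentMk v = C then d (Sum.inl v) else 0

/-- Total degree of a monomial in the two variables of the vertex `v`. -/
def cdeg (d : (V ⊕ V) →₀ ℕ) (v : V) : ℕ := d (Sum.inl v) + d (Sum.inr v)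

lemma sum_split (f : V → ℕ) (i j : V) (hij : i ≠ j) :
    ∑ v : V, f v = (∑ v ∈ Finset.univ \ {i, j}, f v) + (f i + f j) := by
  rw [← Finset.sum_sdiff (Finset.subset_univ {i, j}), Finset.sum_pair hij]

end BEI
end Graph

section RewA
open MvPolynomial
namespace BEI
variable {V : Type*} [Fintype V] [DecidableEq V] {K : Type*} [Field K]

open Finsupp in
theorem rew (G : SimpleGraph V) (S : Set V) :
    ∀ N : ℕ, ∀ d d' : (V ⊕ V) →₀ ℕ,
    (∑ v : V, Nat.dist (d (Sum.inl v)) (d' (Sum.inl v))) ≤ N →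
    (∀ v, cdeg d v = cdeg d' v) →
    (∀ C, xdeg G S d C = xdeg G S d' C) →
    monomial d (1:K) - monomial d' 1 ∈ PS K G S := by
  classical
  intro N
  induction N with
  | zero =>
    intro d d' hm hc _
    have hall : ∀ v : V, d (Sum.inl v) = d' (Sum.inl v) := by
      intro v
      have h0 : Nat.dist (d (Sum.inl v)) (d' (Sum.inl v)) = 0 := by
        have := Finset.sum_eq_zero_iff.mp (Nat.le_zero.mp hm) v (Finset.mem_univ v)
        exact this
      simpa [Nat.dist] using Nat.eq_of_dist_eq_zero h0
    have : d = d' := by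
      ext z
      cases z with
      | inl v => exact hall v
      | inr v => have := hc v; have h2 := hall v; unfold cdeg at this; omega
    rw [this, sub_self]
    exact Ideal.zero_mem _
  | succ N ih =>
    intro d d' hm hc hx
    have core : ∀ e e' : (V ⊕ V) →₀ ℕ,
        (∑ v : V, Nat.dist (e (Sum.inl v)) (e' (Sum.inl v))) ≤ N + 1 →
        (∀ v, cdeg e v = cdeg e' v) →
        (∀ C, xdeg G S e C = xdeg G S e' C) →
        (∃ i, e' (Sum.inl i) < e (Sum.inl i)) →
        monomial e (1:K) - monomial e' 1 ∈ PS K G S := by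
      rintro e e' hm hc hx ⟨i, hi⟩
      set cc := (delGraph G S).connectedComponentMk with hccdef
      -- find a vertex j in the same component where e' is bigger
      have hj : ∃ j, cc j = cc i ∧ e (Sum.inl j) < e' (Sum.inl j) := by
        by_contra hno
        push_neg at hno
        have hlt : xdeg G S e' (cc i) < xdeg G S e (cc i) := by
          unfold xdeg
          apply Finset.sum_lt_sum
          · intro v _
            by_cases h : (delGraph G S).connectedComponentMk v = cc i
            · rw [if_pos h, if_pos h]; exact hno v h
            · rw [if_neg h, if_neg h]
          · exact ⟨i, Finset.mem_univ i, by
              rw [if_pos rfl, if_pos rfl]; exact hi⟩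
        rw [hx (cc i)] at hlt
        exact lt_irrefl _ hlt
      obtain ⟨j, hccji, hj⟩ := hj
      have hij : i ≠ j := fun h => by rw [h] at hi; omega
      have hji : j ≠ i := fun h => hij h.symm
      have hbj : 1 ≤ e (Sum.inr j) := by have := hc j; unfold cdeg at this; omega
      set u : (V ⊕ V) →₀ ℕ := Finsupp.single (Sum.inl i) 1 + Finsupp.single (Sum.inr j) 1 with hu
      set w : (V ⊕ V) →₀ ℕ := Finsupp.single (Sum.inl j) 1 + Finsupp.single (Sum.inr i) 1 with hw
      have hule : u ≤ e := by
        rw [Finsupp.le_def]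
        intro z
        rw [hu, Finsupp.add_apply, Finsupp.single_apply, Finsupp.single_apply]
        by_cases h1 : (Sum.inl i : V ⊕ V) = z <;> by_cases h2 : (Sum.inr j : V ⊕ V) = z
        · rw [← h1] at h2; exact absurd h2 (by simp)
        · rw [if_pos h1, if_neg h2, ← h1]; omega
        · rw [if_neg h1, if_pos h2, ← h2]; omega
        · rw [if_neg h1, if_neg h2]; omega
      set e₂ := e - u + w with he₂
      have happ : ∀ z, e₂ z = e z - u z + w z := by
        intro z; rw [he₂, Finsupp.add_apply, Finsupp.tsub_apply]
      have huw : ∀ z : V ⊕ V, (z ≠ Sum.inl i ∧ z ≠ Sum.inr j ∧ z ≠ Sum.inl j ∧ z ≠ Sum.inr i) →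
          u z = 0 ∧ w z = 0 := by
        intro z hz
        rw [hu, hw, Finsupp.add_apply, Finsupp.add_apply]
        rw [Finsupp.single_apply, Finsupp.single_apply, Finsupp.single_apply,
          Finsupp.single_apply]
        rw [if_neg (fun h => hz.1 h.symm), if_neg (fun h => hz.2.1 h.symm),
          if_neg (fun h => hz.2.2.1 h.symm), if_neg (fun h => hz.2.2.2 h.symm)]
        omega
      have hval : e₂ (Sum.inl i) = e (Sum.inl i) - 1 ∧ e₂ (Sum.inr j) = e (Sum.inr j) - 1 ∧
          e₂ (Sum.inl j) = e (Sum.inl j) + 1 ∧ e₂ (Sum.inr i) = e (Sum.inr i) + 1 := by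
        refine ⟨?_, ?_, ?_, ?_⟩ <;>
          · rw [happ, hu, hw]
            simp [Finsupp.single_apply, hij, hji]
      have hoff : ∀ z : V ⊕ V, (z ≠ Sum.inl i ∧ z ≠ Sum.inr j ∧ z ≠ Sum.inl j ∧ z ≠ Sum.inr i) →
          e₂ z = e z := by
        intro z hz
        rw [happ, (huw z hz).1, (huw z hz).2]
        omega
      -- membership of the first difference
      have hmem1 : monomial e (1:K) - monomial e₂ 1 ∈ PS K G S := by
        have hXu : (X (Sum.inl i) * X (Sum.inr j) : MvPolynomial (V ⊕ V) K) = monomial u 1 := by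
          rw [hu, X, X, monomial_mul, one_mul]
        have hXw : (X (Sum.inl j) * X (Sum.inr i) : MvPolynomial (V ⊕ V) K) = monomial w 1 := by
          rw [hw, X, X, monomial_mul, one_mul]
        have hkey : monomial e (1:K) - monomial e₂ 1 =
            monomial (e - u) 1 * (X (Sum.inl i) * X (Sum.inr j) - X (Sum.inl j) * X (Sum.inr i)) := by
          rw [mul_sub, hXu, hXw, monomial_mul, monomial_mul, one_mul,
            tsub_add_cancel_of_le hule, he₂]
        rw [hkey]
        exact Ideal.mul_mem_left _ _ (minor_mem_PS G S
          (SimpleGraph.ConnectedComponent.exact hccji).symm)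
      -- invariants of e₂ versus e'
      have hc₂ : ∀ v, cdeg e₂ v = cdeg e' v := by
        intro v
        by_cases hvi : v = i
        · subst hvi
          unfold cdeg
          rw [hval.1, hval.2.2.2]
          have := hc v; unfold cdeg at this
          have h1 : 1 ≤ e (Sum.inl v) := by omega
          omega
        · by_cases hvj : v = j
          · subst hvj
            unfold cdeg
            rw [hval.2.1, hval.2.2.1]
            have := hc v; unfold cdeg at this
            omega
          · unfold cdeg
            rw [hoff _ (by simp [hvi, hvj]), hoff _ (by simp [hvi, hvj])]
            exact hc v
      have hx₂ : ∀ C, xdeg G S e₂ C = xdeg G S e' C := by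
        intro C
        rw [← hx C]
        unfold xdeg
        rw [sum_split _ i j hij, sum_split
          (fun v => if (delGraph G S).connectedComponentMk v = C then e (Sum.inl v) else 0) i j hij]
        congr 1
        · apply Finset.sum_congr rfl
          intro v hv
          rw [Finset.mem_sdiff, Finset.mem_insert, Finset.mem_singleton] at hv
          push_neg at hv
          rw [hoff _ (by simp [hv.2.1, hv.2.2])]
        · rw [hval.1, hval.2.2.1]
          have hcij : (delGraph G S).connectedComponentMk j
              = (delGraph G S).connectedComponentMk i := hccji
          by_cases h : (delGraph G S).connectedComponentMk i = C
          · rw [if_pos h, if_pos h, if_pos (hcij.trans h), if_pos (hcij.trans h)]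
            have h1 : 1 ≤ e (Sum.inl i) := by omega
            omega
          · rw [if_neg h, if_neg h, if_neg (fun hh => h (hcij ▸ hh)),
              if_neg (fun hh => h (hcij ▸ hh))]
      have hm₂ : (∑ v : V, Nat.dist (e₂ (Sum.inl v)) (e' (Sum.inl v))) ≤ N := by
        have hsplit1 := sum_split (fun v => Nat.dist (e₂ (Sum.inl v)) (e' (Sum.inl v))) i j hij
        have hsplit2 := sum_split (fun v => Nat.dist (e (Sum.inl v)) (e' (Sum.inl v))) i j hij
        have hofs : (∑ v ∈ Finset.univ \ {i, j}, Nat.dist (e₂ (Sum.inl v)) (e' (Sum.inl v)))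
            = ∑ v ∈ Finset.univ \ {i, j}, Nat.dist (e (Sum.inl v)) (e' (Sum.inl v)) := by
          apply Finset.sum_congr rfl
          intro v hv
          rw [Finset.mem_sdiff, Finset.mem_insert, Finset.mem_singleton] at hv
          push_neg at hv
          rw [hoff _ (by simp [hv.2.1, hv.2.2])]
        rw [hsplit2] at hm
        rw [hsplit1, hofs]
        simp only [hval.1, hval.2.2.1]
        simp only [Nat.dist] at hm ⊢
        omega
      have hmem2 := ih e₂ e' hm₂ hc₂ hx₂
      have : monomial e (1:K) - monomial e' 1 =
          (monomial e 1 - monomial e₂ 1) + (monomial e₂ 1 - monomial e' 1) := by ring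
      rw [this]
      exact Ideal.add_mem _ hmem1 hmem2
    by_cases heq : ∀ v : V, d (Sum.inl v) = d' (Sum.inl v)
    · have : d = d' := by
        ext z
        cases z with
        | inl v => exact heq v
        | inr v => have := hc v; have h2 := heq v; unfold cdeg at this; omega
      rw [this, sub_self]
      exact Ideal.zero_mem _
    · push_neg at heq
      obtain ⟨v₀, hv₀⟩ := heq
      rcases Nat.lt_or_ge (d' (Sum.inl v₀)) (d (Sum.inl v₀)) with h | h
      · exact core d d' hm hc hx ⟨v₀, h⟩
      · have h' : d (Sum.inl v₀) < d' (Sum.inl v₀) := by omega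
        have := core d' d (by
            rw [show (∑ v : V, Nat.dist (d' (Sum.inl v)) (d (Sum.inl v)))
              = ∑ v : V, Nat.dist (d (Sum.inl v)) (d' (Sum.inl v)) from
              Finset.sum_congr rfl fun v _ => Nat.dist_comm _ _]
            exact hm)
          (fun v => (hc v).symm) (fun C => (hx C).symm) ⟨v₀, h'⟩
        have h2 := (PS K G S).neg_mem this
        rwa [neg_sub] at h2

end BEI
end RewA

section PhiA
open MvPolynomial
namespace BEI

variable {V : Type*} [Fintype V] [DecidableEq V] {K : Type*} [Field K]

/-- `bd S z` holds when the variable `z` belongs to a vertex of `S`. -/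
def bd (S : Set V) : V ⊕ V → Prop := Sum.elim (· ∈ S) (· ∈ S)

omit [Fintype V] [DecidableEq V] in
lemma T_apply [Fintype V] {W : Type*} (E : (V ⊕ V) → (W →₀ ℕ)) (d : (V ⊕ V) →₀ ℕ) (w : W) :
    T E d w = ∑ z : V ⊕ V, d z * E z w := by
  classical
  rw [T, Finsupp.sum, Finsupp.finset_sum_apply]
  rw [Finset.sum_subset (Finset.subset_univ _)]
  · exact Finset.sum_congr rfl fun z _ => by
      rw [Finsupp.smul_apply, smul_eq_mul]
  · intro z _ hz
    rw [Finsupp.notMem_support_iff.mp hz, zero_smul]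
    rfl

/-- The exponents for the parametrization whose kernel is `P_S(G)`. -/
noncomputable def EA (G : SimpleGraph V) (S : Set V) :
    (V ⊕ V) → (((delGraph G S).ConnectedComponent ⊕ V) →₀ ℕ)
  | Sum.inl v => Finsupp.single (Sum.inl ((delGraph G S).connectedComponentMk v)) 1 +
      Finsupp.single (Sum.inr v) 1
  | Sum.inr v => Finsupp.single (Sum.inr v) 1

lemma TA_inr (G : SimpleGraph V) (S : Set V) (d : (V ⊕ V) →₀ ℕ) (v : V) :
    T (EA G S) d (Sum.inr v) = cdeg d v := by
  classical
  rw [T_apply, Fintype.sum_sum_type]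
  have h1 : ∀ u : V, d (Sum.inl u) * EA G S (Sum.inl u) (Sum.inr v)
      = if u = v then d (Sum.inl u) else 0 := by
    intro u
    simp [EA, Finsupp.single_apply]
  have h2 : ∀ u : V, d (Sum.inr u) * EA G S (Sum.inr u) (Sum.inr v)
      = if u = v then d (Sum.inr u) else 0 := by
    intro u
    simp [EA, Finsupp.single_apply]
  rw [Finset.sum_congr rfl (fun u _ => h1 u), Finset.sum_congr rfl (fun u _ => h2 u),
    Finset.sum_ite_eq' Finset.univ v, Finset.sum_ite_eq' Finset.univ v,
    if_pos (Finset.mem_univ v), if_pos (Finset.mem_univ v)]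
  rfl

lemma TA_inl (G : SimpleGraph V) (S : Set V) (d : (V ⊕ V) →₀ ℕ)
    (C : (delGraph G S).ConnectedComponent) :
    T (EA G S) d (Sum.inl C) = xdeg G S d C := by
  classical
  rw [T_apply, Fintype.sum_sum_type]
  have h1 : ∀ u : V, d (Sum.inl u) * EA G S (Sum.inl u) (Sum.inl C)
      = if (delGraph G S).connectedComponentMk u = C then d (Sum.inl u) else 0 := by
    intro u
    simp [EA, Finsupp.single_apply]
  have h2 : ∀ u : V, d (Sum.inr u) * EA G S (Sum.inr u) (Sum.inl C) = 0 := by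
    intro u
    simp [EA, Finsupp.single_apply]
  rw [Finset.sum_congr rfl (fun u _ => h1 u), Finset.sum_congr rfl (fun u _ => h2 u),
    Finset.sum_const_zero, add_zero]
  rw [xdeg]

open Classical in
/-- The parametrization map for `P_S(G)`. -/
noncomputable def PhiA (G : SimpleGraph V) (S : Set V) (K : Type*) [Field K] :
    MvPolynomial (V ⊕ V) K →ₐ[K]
      MvPolynomial ((delGraph G S).ConnectedComponent ⊕ V) K :=
  aeval (fun z => if bd S z then 0 else monomial (EA G S z) 1)

open Classical in
lemma PS_le_kerA (G : SimpleGraph V) (S : Set V) :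
    PS K G S ≤ RingHom.ker (PhiA G S K).toRingHom := by
  rw [PS, Ideal.span_le]
  rintro f hf
  rw [SetLike.mem_coe, RingHom.mem_ker]
  show PhiA G S K f = 0
  rcases hf with ⟨v, hv, hf | hf⟩ | ⟨i, j, hr, rfl⟩
  · subst hf
    rw [PhiA, aeval_X, if_pos (show bd S (Sum.inl v) from hv)]
  · subst hf
    rw [PhiA, aeval_X, if_pos (show bd S (Sum.inr v) from hv)]
  · by_cases hij : i = j
    · subst hij
      rw [sub_self, map_zero]
    · have hi : i ∉ S := not_mem_S_of_reachable hr hij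
      have hj : j ∉ S := not_mem_S_of_reachable hr.symm (fun h => hij h.symm)
      rw [map_sub, map_mul, map_mul, PhiA, aeval_X, aeval_X, aeval_X, aeval_X,
        if_neg (show ¬ bd S (Sum.inl i) from hi), if_neg (show ¬ bd S (Sum.inr j) from hj),
        if_neg (show ¬ bd S (Sum.inl j) from hj), if_neg (show ¬ bd S (Sum.inr i) from hi),
        monomial_mul, monomial_mul]
      have hcc := SimpleGraph.ConnectedComponent.sound hr
      rw [show EA G S (Sum.inl i) + EA G S (Sum.inr j)
          = EA G S (Sum.inl j) + EA G S (Sum.inr i) by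
        show Finsupp.single (Sum.inl ((delGraph G S).connectedComponentMk i)) 1 +
            Finsupp.single (Sum.inr i) 1 + Finsupp.single (Sum.inr j) 1
          = Finsupp.single (Sum.inl ((delGraph G S).connectedComponentMk j)) 1 +
            Finsupp.single (Sum.inr j) 1 + Finsupp.single (Sum.inr i) 1
        rw [hcc]; abel]
      rw [sub_self]

open Classical in
lemma kerA_le_PS (G : SimpleGraph V) (S : Set V) (f : MvPolynomial (V ⊕ V) K)
    (hf : PhiA G S K f = 0) : f ∈ PS K G S := by
  apply mem_of_aeval_eq_zero (bd S) (EA G S) (PS K G S)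
  · rintro (v | v) hv
    · exact X_inl_mem_PS G S hv
    · exact X_inr_mem_PS G S hv
  · intro d d' _ _ hT
    apply rew G S (∑ v : V, Nat.dist (d (Sum.inl v)) (d' (Sum.inl v))) d d' le_rfl
    · intro v
      rw [← TA_inr G S d v, ← TA_inr G S d' v, hT]
    · intro C
      rw [← TA_inl G S d C, ← TA_inl G S d' C, hT]
  · exact hf

theorem PS_eq_ker (G : SimpleGraph V) (S : Set V) :
    PS K G S = RingHom.ker (PhiA G S K).toRingHom := by
  apply le_antisymm (PS_le_kerA G S)
  intro f hf
  exact kerA_le_PS G S f (by rwa [RingHom.mem_ker] at hf)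

theorem PS_isPrime (G : SimpleGraph V) (S : Set V) : (PS K G S).IsPrime := by
  rw [PS_eq_ker]
  exact RingHom.ker_isPrime _

theorem X_inl_not_mem_PS (G : SimpleGraph V) (S : Set V) {v : V} (hv : v ∉ S) :
    X (Sum.inl v) ∉ PS K G S := by
  classical
  intro h
  have h2 := PS_le_kerA G S h
  rw [RingHom.mem_ker] at h2
  rw [show (PhiA G S K).toRingHom (X (Sum.inl v)) = PhiA G S K (X (Sum.inl v)) from rfl,
    PhiA, aeval_X, if_neg (show ¬ bd S (Sum.inl v) from hv)] at h2
  exact one_ne_zero (MvPolynomial.monomial_eq_zero.mp h2)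

end BEI
end PhiA

section PhiB1
open MvPolynomial
namespace BEI

variable {V : Type*} [Fintype V] [DecidableEq V] {K : Type*} [Field K]

/-- Exchanging an `x` and a `y` variable within a component: membership and invariants. -/
theorem swap_mem (G : SimpleGraph V) (S : Set V) {i j : V} (hij : i ≠ j)
    (hcc : (delGraph G S).connectedComponentMk i = (delGraph G S).connectedComponentMk j)
    (e : (V ⊕ V) →₀ ℕ) (hi : 1 ≤ e (Sum.inl i)) (hj : 1 ≤ e (Sum.inr j)) :
    ∃ e₁ : (V ⊕ V) →₀ ℕ,
      monomial e (1:K) - monomial e₁ 1 ∈ PS K G S ∧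
      (∀ v, cdeg e₁ v = cdeg e v) ∧
      (∀ C, xdeg G S e₁ C = xdeg G S e C) ∧
      e₁ (Sum.inl j) = e (Sum.inl j) + 1 := by
  classical
  have hji : j ≠ i := fun h => hij h.symm
  set u : (V ⊕ V) →₀ ℕ := Finsupp.single (Sum.inl i) 1 + Finsupp.single (Sum.inr j) 1 with hu
  set w : (V ⊕ V) →₀ ℕ := Finsupp.single (Sum.inl j) 1 + Finsupp.single (Sum.inr i) 1 with hw
  have hule : u ≤ e := by
    rw [Finsupp.le_def]
    intro z
    rw [hu, Finsupp.add_apply, Finsupp.single_apply, Finsupp.single_apply]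
    by_cases h1 : (Sum.inl i : V ⊕ V) = z <;> by_cases h2 : (Sum.inr j : V ⊕ V) = z
    · rw [← h1] at h2; exact absurd h2 (by simp)
    · rw [if_pos h1, if_neg h2, ← h1]; omega
    · rw [if_neg h1, if_pos h2, ← h2]; omega
    · rw [if_neg h1, if_neg h2]; omega
  refine ⟨e - u + w, ?_⟩
  set e₂ := e - u + w with he₂
  have happ : ∀ z, e₂ z = e z - u z + w z := by
    intro z; rw [he₂, Finsupp.add_apply, Finsupp.tsub_apply]
  have huw : ∀ z : V ⊕ V, (z ≠ Sum.inl i ∧ z ≠ Sum.inr j ∧ z ≠ Sum.inl j ∧ z ≠ Sum.inr i) →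
      u z = 0 ∧ w z = 0 := by
    intro z hz
    rw [hu, hw, Finsupp.add_apply, Finsupp.add_apply]
    rw [Finsupp.single_apply, Finsupp.single_apply, Finsupp.single_apply,
      Finsupp.single_apply]
    rw [if_neg (fun h => hz.1 h.symm), if_neg (fun h => hz.2.1 h.symm),
      if_neg (fun h => hz.2.2.1 h.symm), if_neg (fun h => hz.2.2.2 h.symm)]
    omega
  have hval : e₂ (Sum.inl i) = e (Sum.inl i) - 1 ∧ e₂ (Sum.inr j) = e (Sum.inr j) - 1 ∧
      e₂ (Sum.inl j) = e (Sum.inl j) + 1 ∧ e₂ (Sum.inr i) = e (Sum.inr i) + 1 := by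
    refine ⟨?_, ?_, ?_, ?_⟩ <;>
      · rw [happ, hu, hw]
        simp [Finsupp.single_apply, hij, hji]
  have hoff : ∀ z : V ⊕ V, (z ≠ Sum.inl i ∧ z ≠ Sum.inr j ∧ z ≠ Sum.inl j ∧ z ≠ Sum.inr i) →
      e₂ z = e z := by
    intro z hz
    rw [happ, (huw z hz).1, (huw z hz).2]
    omega
  refine ⟨?_, ?_, ?_, hval.2.2.1⟩
  · have hXu : (X (Sum.inl i) * X (Sum.inr j) : MvPolynomial (V ⊕ V) K) = monomial u 1 := by
      rw [hu, X, X, monomial_mul, one_mul]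
    have hXw : (X (Sum.inl j) * X (Sum.inr i) : MvPolynomial (V ⊕ V) K) = monomial w 1 := by
      rw [hw, X, X, monomial_mul, one_mul]
    have hkey : monomial e (1:K) - monomial e₂ 1 =
        monomial (e - u) 1 * (X (Sum.inl i) * X (Sum.inr j) - X (Sum.inl j) * X (Sum.inr i)) := by
      rw [mul_sub, hXu, hXw, monomial_mul, monomial_mul, one_mul,
        tsub_add_cancel_of_le hule, he₂]
    rw [hkey]
    exact Ideal.mul_mem_left _ _ (minor_mem_PS G S (SimpleGraph.ConnectedComponent.exact hcc))
  · intro v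
    by_cases hvi : v = i
    · subst hvi
      unfold cdeg
      rw [hval.1, hval.2.2.2]
      omega
    · by_cases hvj : v = j
      · subst hvj
        unfold cdeg
        rw [hval.2.1, hval.2.2.1]
        omega
      · unfold cdeg
        rw [hoff _ (by simp [hvi, hvj]), hoff _ (by simp [hvi, hvj])]
  · intro C
    unfold xdeg
    rw [sum_split _ i j hij, sum_split
      (fun v => if (delGraph G S).connectedComponentMk v = C then e (Sum.inl v) else 0) i j hij]
    congr 1
    · apply Finset.sum_congr rfl
      intro v hv
      rw [Finset.mem_sdiff, Finset.mem_insert, Finset.mem_singleton] at hv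
      push_neg at hv
      rw [hoff _ (by simp [hv.2.1, hv.2.2])]
    · simp only [hval.1, hval.2.2.1]
      by_cases h : (delGraph G S).connectedComponentMk i = C
      · rw [if_pos h, if_pos h, if_pos (hcc.symm.trans h), if_pos (hcc.symm.trans h)]
        omega
      · rw [if_neg h, if_neg h, if_neg (fun hh => h (hcc.trans hh)),
          if_neg (fun hh => h (hcc.trans hh))]

/-- One `x`-variable of the vertex `v` is present, so the `x`-degree of its component
is positive. -/
lemma le_xdeg_of_le (G : SimpleGraph V) (S : Set V) (e : (V ⊕ V) →₀ ℕ) (v : V) :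
    e (Sum.inl v) ≤ xdeg G S e ((delGraph G S).connectedComponentMk v) := by
  classical
  unfold xdeg
  have := Finset.single_le_sum (f := fun u =>
    if (delGraph G S).connectedComponentMk u = (delGraph G S).connectedComponentMk v
    then e (Sum.inl u) else 0) (fun u _ => Nat.zero_le _) (Finset.mem_univ v)
  simpa using this

lemma exists_pos_of_xdeg_pos (G : SimpleGraph V) (S : Set V) (e : (V ⊕ V) →₀ ℕ)
    (C : (delGraph G S).ConnectedComponent) (h : 1 ≤ xdeg G S e C) :
    ∃ i, (delGraph G S).connectedComponentMk i = C ∧ 1 ≤ e (Sum.inl i) := by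
  classical
  by_contra hno
  push_neg at hno
  have : xdeg G S e C = 0 := by
    unfold xdeg
    apply Finset.sum_eq_zero
    intro v _
    by_cases hv : (delGraph G S).connectedComponentMk v = C
    · rw [if_pos hv]
      have := hno v hv
      omega
    · rw [if_neg hv]
  omega

end BEI
end PhiB1

section PhiB2
open MvPolynomial
namespace BEI

variable {V : Type*} [Fintype V] [DecidableEq V] {K : Type*} [Field K]

open Classical in
theorem trade_mem (G : SimpleGraph V) (S : Set V) {a b : V} (hab : a ≠ b)
    (e₁ : (V ⊕ V) →₀ ℕ) (hea : 1 ≤ e₁ (Sum.inl a)) :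
    ∃ e₂ : (V ⊕ V) →₀ ℕ,
      monomial e₁ (1:K) - monomial e₂ 1 ∈
        Ideal.span {X (Sum.inl a) - X (Sum.inl b)} ∧
      (∀ v, v ≠ a → v ≠ b → cdeg e₂ v = cdeg e₁ v) ∧
      cdeg e₂ a = cdeg e₁ a - 1 ∧ cdeg e₂ b = cdeg e₁ b + 1 ∧
      (∀ C, xdeg G S e₂ C = xdeg G S e₁ C
        - (if (delGraph G S).connectedComponentMk a = C then 1 else 0)
        + (if (delGraph G S).connectedComponentMk b = C then 1 else 0)) := by
  classical
  have hba : b ≠ a := fun h => hab h.symm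
  set u : (V ⊕ V) →₀ ℕ := Finsupp.single (Sum.inl a) 1 with hu
  set w : (V ⊕ V) →₀ ℕ := Finsupp.single (Sum.inl b) 1 with hw
  have hule : u ≤ e₁ := by
    rw [hu, Finsupp.single_le_iff]
    exact hea
  refine ⟨e₁ - u + w, ?_⟩
  set e₂ := e₁ - u + w with he₂
  have happ : ∀ z, e₂ z = e₁ z - u z + w z := by
    intro z; rw [he₂, Finsupp.add_apply, Finsupp.tsub_apply]
  have hvala : e₂ (Sum.inl a) = e₁ (Sum.inl a) - 1 := by
    rw [happ, hu, hw]
    simp [Finsupp.single_apply, hba]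
  have hvalb : e₂ (Sum.inl b) = e₁ (Sum.inl b) + 1 := by
    rw [happ, hu, hw]
    simp [Finsupp.single_apply, hab]
  have hoff : ∀ z : V ⊕ V, z ≠ Sum.inl a → z ≠ Sum.inl b → e₂ z = e₁ z := by
    intro z h1 h2
    rw [happ, hu, hw, Finsupp.single_apply, Finsupp.single_apply,
      if_neg (Ne.symm h1), if_neg (Ne.symm h2)]
    omega
  refine ⟨?_, ?_, ?_, ?_, ?_⟩
  · have hkey : monomial e₁ (1:K) - monomial e₂ 1 =
        monomial (e₁ - u) 1 * (X (Sum.inl a) - X (Sum.inl b)) := by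
      rw [mul_sub, X, X, monomial_mul, monomial_mul, mul_one, hu,
        tsub_add_cancel_of_le hule, ← hu, he₂, hw]
    rw [hkey]
    exact Ideal.mul_mem_left _ _ (Ideal.subset_span (Set.mem_singleton _))
  · intro v hv1 hv2
    unfold cdeg
    rw [hoff _ (by simp [hv1]) (by simp [hv2]), hoff _ (by simp) (by simp)]
  · unfold cdeg
    rw [hvala, hoff _ (by simp) (by simp)]
    omega
  · unfold cdeg
    rw [hvalb, hoff _ (by simp) (by simp)]
    omega
  · intro C
    unfold xdeg
    rw [sum_split _ a b hab, sum_split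
      (fun v => if (delGraph G S).connectedComponentMk v = C then e₁ (Sum.inl v) else 0) a b hab]
    have hofs : (∑ v ∈ Finset.univ \ {a, b},
        if (delGraph G S).connectedComponentMk v = C then e₂ (Sum.inl v) else 0)
        = ∑ v ∈ Finset.univ \ {a, b},
        if (delGraph G S).connectedComponentMk v = C then e₁ (Sum.inl v) else 0 := by
      apply Finset.sum_congr rfl
      intro v hv
      rw [Finset.mem_sdiff, Finset.mem_insert, Finset.mem_singleton] at hv
      push_neg at hv
      rw [hoff _ (by simp [hv.2.1]) (by simp [hv.2.2])]
    rw [hofs]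
    simp only [hvala, hvalb]
    split_ifs <;> omega

end BEI
end PhiB2

section RewB
open MvPolynomial
namespace BEI

variable {V : Type*} [Fintype V] [DecidableEq V] {K : Type*} [Field K]

theorem rewB (G : SimpleGraph V) (S : Set V) {a b : V}
    (hnr : ¬ (delGraph G S).Reachable a b) :
    ∀ N : ℕ, ∀ d d' : (V ⊕ V) →₀ ℕ,
    Nat.dist (xdeg G S d ((delGraph G S).connectedComponentMk a))
      (xdeg G S d' ((delGraph G S).connectedComponentMk a)) ≤ N →
    (∀ C, C ≠ (delGraph G S).connectedComponentMk a →
      C ≠ (delGraph G S).connectedComponentMk b → xdeg G S d C = xdeg G S d' C) →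
    (xdeg G S d ((delGraph G S).connectedComponentMk a)
        + xdeg G S d ((delGraph G S).connectedComponentMk b)
      = xdeg G S d' ((delGraph G S).connectedComponentMk a)
        + xdeg G S d' ((delGraph G S).connectedComponentMk b)) →
    (∀ v, v ≠ a → v ≠ b → cdeg d v = cdeg d' v) →
    (cdeg d a + xdeg G S d ((delGraph G S).connectedComponentMk b)
      = cdeg d' a + xdeg G S d' ((delGraph G S).connectedComponentMk b)) →
    (cdeg d b + xdeg G S d ((delGraph G S).connectedComponentMk a)
      = cdeg d' b + xdeg G S d' ((delGraph G S).connectedComponentMk a)) →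
    monomial d (1:K) - monomial d' 1 ∈
      PS K G S + Ideal.span {X (Sum.inl a) - X (Sum.inl b)} := by
  classical
  have hab : a ≠ b := by rintro rfl; exact hnr (SimpleGraph.Reachable.refl a)
  have hccab : (delGraph G S).connectedComponentMk a ≠ (delGraph G S).connectedComponentMk b :=
    fun h => hnr (SimpleGraph.ConnectedComponent.exact h)
  set cc := (delGraph G S).connectedComponentMk with hccdef
  have base : ∀ d d' : (V ⊕ V) →₀ ℕ,
      xdeg G S d (cc a) = xdeg G S d' (cc a) →
      (∀ C, C ≠ cc a → C ≠ cc b → xdeg G S d C = xdeg G S d' C) →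
      (xdeg G S d (cc a) + xdeg G S d (cc b)
        = xdeg G S d' (cc a) + xdeg G S d' (cc b)) →
      (∀ v, v ≠ a → v ≠ b → cdeg d v = cdeg d' v) →
      (cdeg d a + xdeg G S d (cc b) = cdeg d' a + xdeg G S d' (cc b)) →
      (cdeg d b + xdeg G S d (cc a) = cdeg d' b + xdeg G S d' (cc a)) →
      monomial d (1:K) - monomial d' 1 ∈
        PS K G S + Ideal.span {X (Sum.inl a) - X (Sum.inl b)} := by
    intro d d' hEq h1 h2 h3 h4 h5
    rw [Submodule.add_eq_sup]
    apply Ideal.mem_sup_left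
    apply rew G S (∑ v : V, Nat.dist (d (Sum.inl v)) (d' (Sum.inl v))) d d' le_rfl
    · intro v
      by_cases hva : v = a
      · subst hva; omega
      · by_cases hvb : v = b
        · subst hvb; omega
        · exact h3 v hva hvb
    · intro C
      by_cases hCa : C = cc a
      · subst hCa; omega
      · by_cases hCb : C = cc b
        · subst hCb; omega
        · exact h1 C hCa hCb
  intro N
  induction N with
  | zero =>
    intro d d' hm h1 h2 h3 h4 h5
    exact base d d' (Nat.eq_of_dist_eq_zero (Nat.le_zero.mp hm)) h1 h2 h3 h4 h5
  | succ N ih =>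
    intro d d' hm h1 h2 h3 h4 h5
    have core : ∀ e e' : (V ⊕ V) →₀ ℕ,
        Nat.dist (xdeg G S e (cc a)) (xdeg G S e' (cc a)) ≤ N + 1 →
        (∀ C, C ≠ cc a → C ≠ cc b → xdeg G S e C = xdeg G S e' C) →
        (xdeg G S e (cc a) + xdeg G S e (cc b)
          = xdeg G S e' (cc a) + xdeg G S e' (cc b)) →
        (∀ v, v ≠ a → v ≠ b → cdeg e v = cdeg e' v) →
        (cdeg e a + xdeg G S e (cc b) = cdeg e' a + xdeg G S e' (cc b)) →
        (cdeg e b + xdeg G S e (cc a) = cdeg e' b + xdeg G S e' (cc a)) →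
        xdeg G S e' (cc a) < xdeg G S e (cc a) →
        monomial e (1:K) - monomial e' 1 ∈
          PS K G S + Ideal.span {X (Sum.inl a) - X (Sum.inl b)} := by
      intro e e' hm h1 h2 h3 h4 h5 hgt
      have hDB : xdeg G S e (cc b) < xdeg G S e' (cc b) := by omega
      have hcda : 1 ≤ cdeg e a := by omega
      have hxpos : 1 ≤ xdeg G S e (cc a) := by omega
      obtain ⟨i, hcci, hei⟩ := exists_pos_of_xdeg_pos G S e (cc a) hxpos
      have hstep : ∃ e₁ : (V ⊕ V) →₀ ℕ,
          (monomial e (1:K) - monomial e₁ 1 ∈ PS K G S) ∧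
          (∀ v, cdeg e₁ v = cdeg e v) ∧ (∀ C, xdeg G S e₁ C = xdeg G S e C) ∧
          1 ≤ e₁ (Sum.inl a) := by
        by_cases hea : 1 ≤ e (Sum.inl a)
        · exact ⟨e, by rw [sub_self]; exact Ideal.zero_mem _, fun v => rfl, fun C => rfl, hea⟩
        · have hira : 1 ≤ e (Sum.inr a) := by unfold cdeg at hcda; omega
          have hia : i ≠ a := fun h => hea (h ▸ hei)
          obtain ⟨e₁, hmem, hc1, hx1, hval⟩ := swap_mem (K := K) G S hia hcci e hei hira
          exact ⟨e₁, hmem, hc1, hx1, by omega⟩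
      obtain ⟨e₁, hmem1, hc1, hx1, hea1⟩ := hstep
      obtain ⟨e₂, hmem2, hc2off, hc2a, hc2b, hx2⟩ := trade_mem (K := K) G S hab e₁ hea1
      have hxA : xdeg G S e₂ (cc a) = xdeg G S e₁ (cc a) - 1 := by
        rw [hx2 (cc a), if_pos rfl, if_neg (Ne.symm hccab)]
        omega
      have hxB : xdeg G S e₂ (cc b) = xdeg G S e₁ (cc b) + 1 := by
        rw [hx2 (cc b), if_pos rfl, if_neg hccab]
        omega
      have hxO : ∀ C, C ≠ cc a → C ≠ cc b → xdeg G S e₂ C = xdeg G S e₁ C := by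
        intro C hCa hCb
        rw [hx2 C, if_neg (fun h => hCa h.symm), if_neg (fun h => hCb h.symm)]
        omega
      have hxe1pos : 1 ≤ xdeg G S e₁ (cc a) := by
        have := le_xdeg_of_le G S e₁ a
        rw [← hccdef] at this
        omega
      have hcd1a : 1 ≤ cdeg e₁ a := by rw [hc1 a]; omega
      have htail := ih e₂ e'
        (by rw [hxA, hx1]; simp only [Nat.dist] at hm ⊢; omega)
        (by intro C hCa hCb; rw [hxO C hCa hCb, hx1]; exact h1 C hCa hCb)
        (by rw [hxA, hxB, hx1, hx1]; omega)
        (by intro v hva hvb; rw [hc2off v hva hvb, hc1 v]; exact h3 v hva hvb)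
        (by rw [hc2a, hxB, hc1, hx1]; omega)
        (by rw [hc2b, hxA, hc1, hx1]; omega)
      have hsplit : monomial e (1:K) - monomial e' 1 =
          (monomial e 1 - monomial e₁ 1) + (monomial e₁ 1 - monomial e₂ 1)
            + (monomial e₂ 1 - monomial e' 1) := by ring
      rw [hsplit]
      apply Ideal.add_mem
      apply Ideal.add_mem
      · rw [Submodule.add_eq_sup]; exact Ideal.mem_sup_left hmem1
      · rw [Submodule.add_eq_sup]; exact Ideal.mem_sup_right hmem2
      · exact htail
    by_cases hd : Nat.dist (xdeg G S d (cc a)) (xdeg G S d' (cc a)) ≤ N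
    · exact ih d d' hd h1 h2 h3 h4 h5
    · have hne : xdeg G S d (cc a) ≠ xdeg G S d' (cc a) := by
        intro h
        rw [h, Nat.dist_self] at hd
        omega
      rcases Nat.lt_or_ge (xdeg G S d' (cc a)) (xdeg G S d (cc a)) with h | h
      · exact core d d' hm h1 h2 h3 h4 h5 h
      · have h' : xdeg G S d (cc a) < xdeg G S d' (cc a) := by omega
        have hres := core d' d (by rw [Nat.dist_comm]; exact hm)
          (fun C hCa hCb => (h1 C hCa hCb).symm) (by omega)
          (fun v hva hvb => (h3 v hva hvb).symm) (by omega) (by omega) h'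
        have h2' := (PS K G S + Ideal.span {X (Sum.inl a) - X (Sum.inl b)}).neg_mem hres
        rwa [neg_sub] at h2'

end BEI
end RewB

section PhiB3
open MvPolynomial
namespace BEI

variable {V : Type*} [Fintype V] [DecidableEq V] {K : Type*} [Field K]

open Classical in
/-- Component-dependent part of the glued parametrization. -/
noncomputable def FB (G : SimpleGraph V) (S : Set V) (a b : V) :
    (delGraph G S).ConnectedComponent → (((delGraph G S).ConnectedComponent ⊕ V) →₀ ℕ) :=
  fun C =>
    Finsupp.single (Sum.inl (if C = (delGraph G S).connectedComponentMk b
      then (delGraph G S).connectedComponentMk a else C)) 1 +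
    (if C = (delGraph G S).connectedComponentMk a then Finsupp.single (Sum.inr b) 1
     else if C = (delGraph G S).connectedComponentMk b then Finsupp.single (Sum.inr a) 1 else 0)

/-- The exponents for the glued parametrization. -/
noncomputable def EB (G : SimpleGraph V) (S : Set V) (a b : V) :
    (V ⊕ V) → (((delGraph G S).ConnectedComponent ⊕ V) →₀ ℕ)
  | Sum.inl v => FB G S a b ((delGraph G S).connectedComponentMk v) + Finsupp.single (Sum.inr v) 1
  | Sum.inr v => Finsupp.single (Sum.inr v) 1

variable (G : SimpleGraph V) (S : Set V) (a b : V)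

lemma TB_inr (hccab : (delGraph G S).connectedComponentMk a
      ≠ (delGraph G S).connectedComponentMk b) (d : (V ⊕ V) →₀ ℕ) (v : V) :
    T (EB G S a b) d (Sum.inr v) = cdeg d v
      + ((if b = v then xdeg G S d ((delGraph G S).connectedComponentMk a) else 0)
      + (if a = v then xdeg G S d ((delGraph G S).connectedComponentMk b) else 0)) := by
  classical
  rw [T_apply, Fintype.sum_sum_type]
  have h1 : ∀ u : V, d (Sum.inl u) * EB G S a b (Sum.inl u) (Sum.inr v)
      = (if u = v then d (Sum.inl u) else 0)
      + ((if b = v then (if (delGraph G S).connectedComponentMk u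
            = (delGraph G S).connectedComponentMk a then d (Sum.inl u) else 0) else 0)
      + (if a = v then (if (delGraph G S).connectedComponentMk u
            = (delGraph G S).connectedComponentMk b then d (Sum.inl u) else 0) else 0)) := by
    intro u
    have he : EB G S a b (Sum.inl u)
        = FB G S a b ((delGraph G S).connectedComponentMk u) + Finsupp.single (Sum.inr u) 1 := rfl
    rw [he, Finsupp.add_apply, FB]
    by_cases hca : (delGraph G S).connectedComponentMk u = (delGraph G S).connectedComponentMk a
    · have hncb : ¬ (delGraph G S).connectedComponentMk u
          = (delGraph G S).connectedComponentMk b := fun h => hccab (hca.symm.trans h)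
      rw [if_neg hncb, if_pos hca, Finsupp.add_apply]
      simp only [hca, hncb, if_true, if_false, Finsupp.single_apply, Sum.inr.injEq,
        reduceCtorEq, if_neg, not_false_iff, hccab, Ne.symm hccab, eq_self_iff_true,
        ne_eq, not_true, not_false_eq_true]
      split_ifs <;> omega
    · by_cases hcb : (delGraph G S).connectedComponentMk u = (delGraph G S).connectedComponentMk b
      · rw [if_pos hcb, if_neg hca, if_pos hcb, Finsupp.add_apply]
        simp only [hca, hcb, if_true, if_false, Finsupp.single_apply, Sum.inr.injEq,
          reduceCtorEq, if_neg, not_false_iff, hccab, Ne.symm hccab, eq_self_iff_true,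
          ne_eq, not_true, not_false_eq_true]
        split_ifs <;> omega
      · rw [if_neg hcb, if_neg hca, if_neg hcb, Finsupp.add_apply]
        simp only [hca, hcb, if_true, if_false, Finsupp.single_apply, Sum.inr.injEq,
          reduceCtorEq, if_neg, not_false_iff, Finsupp.coe_zero, Pi.zero_apply,
          eq_self_iff_true, ne_eq, not_true, not_false_eq_true]
        split_ifs <;> omega
  have h2 : ∀ u : V, d (Sum.inr u) * EB G S a b (Sum.inr u) (Sum.inr v)
      = if u = v then d (Sum.inr u) else 0 := by
    intro u
    have he : EB G S a b (Sum.inr u)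
        = (Finsupp.single (Sum.inr u) 1 : ((delGraph G S).ConnectedComponent ⊕ V) →₀ ℕ) := rfl
    rw [he, Finsupp.single_apply]
    simp only [Sum.inr.injEq]
    split_ifs <;> omega
  rw [Finset.sum_congr rfl (fun u _ => h1 u), Finset.sum_congr rfl (fun u _ => h2 u)]
  rw [Finset.sum_add_distrib, Finset.sum_add_distrib,
    Finset.sum_ite_eq' Finset.univ v (fun u => d (Sum.inl u)),
    Finset.sum_ite_eq' Finset.univ v (fun u => d (Sum.inr u)),
    if_pos (Finset.mem_univ v), if_pos (Finset.mem_univ v)]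
  have h3 : (∑ u : V, if b = v then (if (delGraph G S).connectedComponentMk u
      = (delGraph G S).connectedComponentMk a then d (Sum.inl u) else 0) else 0)
      = if b = v then xdeg G S d ((delGraph G S).connectedComponentMk a) else 0 := by
    by_cases hv : b = v <;> simp only [hv, if_true, if_false, Finset.sum_const_zero] <;> rfl
  have h4 : (∑ u : V, if a = v then (if (delGraph G S).connectedComponentMk u
      = (delGraph G S).connectedComponentMk b then d (Sum.inl u) else 0) else 0)
      = if a = v then xdeg G S d ((delGraph G S).connectedComponentMk b) else 0 := by
    by_cases hv : a = v <;> simp only [hv, if_true, if_false, Finset.sum_const_zero] <;> rfl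
  rw [h3, h4]
  show d (Sum.inl v) + _ + d (Sum.inr v) = d (Sum.inl v) + d (Sum.inr v) + _
  ring
end BEI
end PhiB3

section PhiB4
open MvPolynomial
namespace BEI

variable {V : Type*} [Fintype V] [DecidableEq V] {K : Type*} [Field K]
variable (G : SimpleGraph V) (S : Set V) (a b : V)

open Classical in
lemma EB_inl_inl (u : V) (C : (delGraph G S).ConnectedComponent) :
    EB G S a b (Sum.inl u) (Sum.inl C)
      = if (if (delGraph G S).connectedComponentMk u = (delGraph G S).connectedComponentMk b
          then (delGraph G S).connectedComponentMk a
          else (delGraph G S).connectedComponentMk u) = C then 1 else 0 := by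
  classical
  have he : EB G S a b (Sum.inl u)
      = FB G S a b ((delGraph G S).connectedComponentMk u) + Finsupp.single (Sum.inr u) 1 := rfl
  rw [he, Finsupp.add_apply, FB, Finsupp.add_apply]
  rw [Finsupp.single_apply]
  have h2 : (Finsupp.single (Sum.inr u) (1:ℕ)) (Sum.inl C) = 0 := by
    rw [Finsupp.single_apply, if_neg (by simp)]
  have h3 : (if (delGraph G S).connectedComponentMk u = (delGraph G S).connectedComponentMk a
      then Finsupp.single (Sum.inr b) (1:ℕ)
      else if (delGraph G S).connectedComponentMk u = (delGraph G S).connectedComponentMk b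
      then Finsupp.single (Sum.inr a) 1 else 0) (Sum.inl C) = 0 := by
    split_ifs <;> simp [Finsupp.single_apply]
  rw [h2, h3, add_zero, add_zero]
  simp only [Sum.inl.injEq]

lemma TB_inl_Ca (hccab : (delGraph G S).connectedComponentMk a
      ≠ (delGraph G S).connectedComponentMk b) (d : (V ⊕ V) →₀ ℕ) :
    T (EB G S a b) d (Sum.inl ((delGraph G S).connectedComponentMk a))
      = xdeg G S d ((delGraph G S).connectedComponentMk a)
        + xdeg G S d ((delGraph G S).connectedComponentMk b) := by
  classical
  rw [T_apply, Fintype.sum_sum_type]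
  have h2 : ∀ u : V, d (Sum.inr u) * EB G S a b (Sum.inr u)
      (Sum.inl ((delGraph G S).connectedComponentMk a)) = 0 := by
    intro u
    have he : EB G S a b (Sum.inr u)
        = (Finsupp.single (Sum.inr u) 1 : ((delGraph G S).ConnectedComponent ⊕ V) →₀ ℕ) := rfl
    rw [he, Finsupp.single_apply, if_neg (by simp), mul_zero]
  rw [Finset.sum_congr rfl (fun u _ => h2 u), Finset.sum_const_zero, add_zero]
  have h1 : ∀ u : V, d (Sum.inl u) * EB G S a b (Sum.inl u)
      (Sum.inl ((delGraph G S).connectedComponentMk a))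
      = (if (delGraph G S).connectedComponentMk u = (delGraph G S).connectedComponentMk a
          then d (Sum.inl u) else 0)
        + (if (delGraph G S).connectedComponentMk u = (delGraph G S).connectedComponentMk b
          then d (Sum.inl u) else 0) := by
    intro u
    rw [EB_inl_inl]
    by_cases hcb : (delGraph G S).connectedComponentMk u = (delGraph G S).connectedComponentMk b
    · have hnca : ¬ (delGraph G S).connectedComponentMk u
          = (delGraph G S).connectedComponentMk a := fun h => hccab (h.symm.trans hcb)
      rw [if_pos hcb, if_pos rfl, if_neg hnca, if_pos hcb, mul_one]
      omega
    · rw [if_neg hcb, if_neg hcb]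
      by_cases hca : (delGraph G S).connectedComponentMk u = (delGraph G S).connectedComponentMk a
      · rw [if_pos hca, if_pos hca, mul_one]
        omega
      · rw [if_neg hca, if_neg hca, mul_zero]
        omega
  rw [Finset.sum_congr rfl (fun u _ => h1 u), Finset.sum_add_distrib]
  rfl

lemma TB_inl_other (d : (V ⊕ V) →₀ ℕ) (C : (delGraph G S).ConnectedComponent)
    (hCa : C ≠ (delGraph G S).connectedComponentMk a)
    (hCb : C ≠ (delGraph G S).connectedComponentMk b) :
    T (EB G S a b) d (Sum.inl C) = xdeg G S d C := by
  classical
  rw [T_apply, Fintype.sum_sum_type]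
  have h2 : ∀ u : V, d (Sum.inr u) * EB G S a b (Sum.inr u) (Sum.inl C) = 0 := by
    intro u
    have he : EB G S a b (Sum.inr u)
        = (Finsupp.single (Sum.inr u) 1 : ((delGraph G S).ConnectedComponent ⊕ V) →₀ ℕ) := rfl
    rw [he, Finsupp.single_apply, if_neg (by simp), mul_zero]
  rw [Finset.sum_congr rfl (fun u _ => h2 u), Finset.sum_const_zero, add_zero]
  have h1 : ∀ u : V, d (Sum.inl u) * EB G S a b (Sum.inl u) (Sum.inl C)
      = if (delGraph G S).connectedComponentMk u = C then d (Sum.inl u) else 0 := by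
    intro u
    rw [EB_inl_inl]
    by_cases hcb : (delGraph G S).connectedComponentMk u = (delGraph G S).connectedComponentMk b
    · have hnc : ¬ (delGraph G S).connectedComponentMk u = C := fun h => hCb ((h.symm.trans hcb).symm).symm
      rw [if_pos hcb, if_neg (fun h => hCa h.symm), if_neg hnc, mul_zero]
    · rw [if_neg hcb]
      by_cases hc : (delGraph G S).connectedComponentMk u = C
      · rw [if_pos hc, if_pos hc, mul_one]
      · rw [if_neg hc, if_neg hc, mul_zero]
  rw [Finset.sum_congr rfl (fun u _ => h1 u)]
  rfl

end BEI
end PhiB4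

section PhiB5
open MvPolynomial
namespace BEI

variable {V : Type*} [Fintype V] [DecidableEq V] {K : Type*} [Field K]

open Classical in
/-- The glued parametrization map. -/
noncomputable def PhiB (G : SimpleGraph V) (S : Set V) (a b : V) (K : Type*) [Field K] :
    MvPolynomial (V ⊕ V) K →ₐ[K]
      MvPolynomial ((delGraph G S).ConnectedComponent ⊕ V) K :=
  aeval (fun z => if bd S z then 0 else monomial (EB G S a b z) 1)

open Classical in
lemma PB_le_kerB (G : SimpleGraph V) (S : Set V) {a b : V}
    (hnr : ¬ (delGraph G S).Reachable a b) (ha : a ∉ S) (hb : b ∉ S) :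
    PS K G S + Ideal.span {X (Sum.inl a) - X (Sum.inl b)}
      ≤ RingHom.ker (PhiB G S a b K).toRingHom := by
  have hccab : (delGraph G S).connectedComponentMk a ≠ (delGraph G S).connectedComponentMk b :=
    fun h => hnr (SimpleGraph.ConnectedComponent.exact h)
  rw [Submodule.add_eq_sup, sup_le_iff]
  constructor
  · rw [PS, Ideal.span_le]
    rintro f hf
    rw [SetLike.mem_coe, RingHom.mem_ker]
    show PhiB G S a b K f = 0
    rcases hf with ⟨v, hv, hf | hf⟩ | ⟨i, j, hr, rfl⟩
    · subst hf
      rw [PhiB, aeval_X, if_pos (show bd S (Sum.inl v) from hv)]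
    · subst hf
      rw [PhiB, aeval_X, if_pos (show bd S (Sum.inr v) from hv)]
    · by_cases hij : i = j
      · subst hij
        rw [sub_self, map_zero]
      · have hi : i ∉ S := not_mem_S_of_reachable hr hij
        have hj : j ∉ S := not_mem_S_of_reachable hr.symm (fun h => hij h.symm)
        rw [map_sub, map_mul, map_mul, PhiB, aeval_X, aeval_X, aeval_X, aeval_X,
          if_neg (show ¬ bd S (Sum.inl i) from hi), if_neg (show ¬ bd S (Sum.inr j) from hj),
          if_neg (show ¬ bd S (Sum.inl j) from hj), if_neg (show ¬ bd S (Sum.inr i) from hi),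
          monomial_mul, monomial_mul]
        have hcc := SimpleGraph.ConnectedComponent.sound hr
        rw [show EB G S a b (Sum.inl i) + EB G S a b (Sum.inr j)
            = EB G S a b (Sum.inl j) + EB G S a b (Sum.inr i) by
          show FB G S a b ((delGraph G S).connectedComponentMk i) + Finsupp.single (Sum.inr i) 1
              + Finsupp.single (Sum.inr j) 1
            = FB G S a b ((delGraph G S).connectedComponentMk j) + Finsupp.single (Sum.inr j) 1
              + Finsupp.single (Sum.inr i) 1
          rw [hcc]; abel]
        rw [sub_self]
  · rw [Ideal.span_le, Set.singleton_subset_iff, SetLike.mem_coe, RingHom.mem_ker]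
    show PhiB G S a b K (X (Sum.inl a) - X (Sum.inl b)) = 0
    rw [map_sub, PhiB, aeval_X, aeval_X, if_neg (show ¬ bd S (Sum.inl a) from ha),
      if_neg (show ¬ bd S (Sum.inl b) from hb)]
    have hFa : FB G S a b ((delGraph G S).connectedComponentMk a)
        = Finsupp.single (Sum.inl ((delGraph G S).connectedComponentMk a)) 1
          + Finsupp.single (Sum.inr b) 1 := by
      rw [FB]
      rw [if_neg hccab, if_pos rfl]
    have hFb : FB G S a b ((delGraph G S).connectedComponentMk b)
        = Finsupp.single (Sum.inl ((delGraph G S).connectedComponentMk a)) 1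
          + Finsupp.single (Sum.inr a) 1 := by
      rw [FB]
      rw [if_pos rfl, if_neg (Ne.symm hccab), if_pos rfl]
    rw [show EB G S a b (Sum.inl a)
        = FB G S a b ((delGraph G S).connectedComponentMk a) + Finsupp.single (Sum.inr a) 1
        from rfl,
      show EB G S a b (Sum.inl b)
        = FB G S a b ((delGraph G S).connectedComponentMk b) + Finsupp.single (Sum.inr b) 1
        from rfl, hFa, hFb]
    rw [show Finsupp.single (Sum.inl ((delGraph G S).connectedComponentMk a)) 1
          + Finsupp.single (Sum.inr b) 1 + Finsupp.single (Sum.inr a) (1:ℕ)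
        = Finsupp.single (Sum.inl ((delGraph G S).connectedComponentMk a)) 1
          + Finsupp.single (Sum.inr a) 1 + Finsupp.single (Sum.inr b) 1 by abel]
    rw [sub_self]

open Classical in
lemma kerB_le_PB (G : SimpleGraph V) (S : Set V) {a b : V}
    (hnr : ¬ (delGraph G S).Reachable a b)
    (f : MvPolynomial (V ⊕ V) K) (hf : PhiB G S a b K f = 0) :
    f ∈ PS K G S + Ideal.span {X (Sum.inl a) - X (Sum.inl b)} := by
  have hab : a ≠ b := by rintro rfl; exact hnr (SimpleGraph.Reachable.refl a)
  have hccab : (delGraph G S).connectedComponentMk a ≠ (delGraph G S).connectedComponentMk b :=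
    fun h => hnr (SimpleGraph.ConnectedComponent.exact h)
  apply mem_of_aeval_eq_zero (bd S) (EB G S a b)
  · rintro (v | v) hv
    · rw [Submodule.add_eq_sup]
      exact Ideal.mem_sup_left (X_inl_mem_PS G S hv)
    · rw [Submodule.add_eq_sup]
      exact Ideal.mem_sup_left (X_inr_mem_PS G S hv)
  · intro d d' _ _ hT
    have hTC := fun w => DFunLike.congr_fun hT w
    apply rewB G S hnr
      (Nat.dist (xdeg G S d ((delGraph G S).connectedComponentMk a))
        (xdeg G S d' ((delGraph G S).connectedComponentMk a))) d d' le_rfl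
    · intro C hCa hCb
      have := hTC (Sum.inl C)
      rwa [TB_inl_other G S a b d C hCa hCb, TB_inl_other G S a b d' C hCa hCb] at this
    · have := hTC (Sum.inl ((delGraph G S).connectedComponentMk a))
      rwa [TB_inl_Ca G S a b hccab d, TB_inl_Ca G S a b hccab d'] at this
    · intro v hva hvb
      have := hTC (Sum.inr v)
      have hb' : ¬ b = v := fun h => hvb h.symm
      have ha' : ¬ a = v := fun h => hva h.symm
      rw [TB_inr G S a b hccab d v, TB_inr G S a b hccab d' v] at this
      simp only [if_neg hb', if_neg ha'] at this
      omega
    · have := hTC (Sum.inr a)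
      have hba : ¬ b = a := fun h => hab h.symm
      rw [TB_inr G S a b hccab d a, TB_inr G S a b hccab d' a] at this
      simp only [if_neg hba, eq_self_iff_true, if_true] at this
      omega
    · have := hTC (Sum.inr b)
      rw [TB_inr G S a b hccab d b, TB_inr G S a b hccab d' b] at this
      simp only [if_neg hab, eq_self_iff_true, if_true] at this
      omega
  · exact hf

theorem PB_isPrime (G : SimpleGraph V) (S : Set V) {a b : V}
    (hnr : ¬ (delGraph G S).Reachable a b) (ha : a ∉ S) (hb : b ∉ S) :
    (PS K G S + Ideal.span {X (Sum.inl a) - X (Sum.inl b)}).IsPrime := by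
  classical
  have heq : PS K G S + Ideal.span {X (Sum.inl a) - X (Sum.inl b)}
      = RingHom.ker (PhiB G S a b K).toRingHom := by
    apply le_antisymm (PB_le_kerB G S hnr ha hb)
    intro f hf
    exact kerB_le_PB G S hnr f (by rwa [RingHom.mem_ker] at hf)
  rw [heq]
  exact RingHom.ker_isPrime _

end BEI
end PhiB5

section Assemble
open MvPolynomial
namespace BEI

variable {V : Type*} [Fintype V] [DecidableEq V] {K : Type*} [Field K]

lemma minor_mem_of_walk (G : SimpleGraph V) (Q : Ideal (MvPolynomial (V ⊕ V) K))
    (hQ : Q.IsPrime)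
    (hedge : ∀ i j, G.Adj i j →
      X (Sum.inl i) * X (Sum.inr j) - X (Sum.inl j) * X (Sum.inr i) ∈ Q) :
    ∀ i j : V, (delGraph G {v | X (Sum.inl v) ∈ Q ∧ X (Sum.inr v) ∈ Q}).Walk i j →
      X (Sum.inl i) * X (Sum.inr j) - X (Sum.inl j) * X (Sum.inr i) ∈ Q := by
  intro i j w
  induction w with
  | nil => rw [sub_self]; exact Q.zero_mem
  | @cons i k j h p ih =>
    have hik := hedge i k h.1
    have hkS : ¬ (X (Sum.inl k) ∈ Q ∧ X (Sum.inr k) ∈ Q) := h.2.2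
    have idX : (X (Sum.inl k) : MvPolynomial (V ⊕ V) K) * (X (Sum.inl i) * X (Sum.inr j) - X (Sum.inl j) * X (Sum.inr i))
        = X (Sum.inl j) * (X (Sum.inl i) * X (Sum.inr k) - X (Sum.inl k) * X (Sum.inr i))
        + X (Sum.inl i) * (X (Sum.inl k) * X (Sum.inr j) - X (Sum.inl j) * X (Sum.inr k)) := by
      ring
    have idY : (X (Sum.inr k) : MvPolynomial (V ⊕ V) K) * (X (Sum.inl i) * X (Sum.inr j) - X (Sum.inl j) * X (Sum.inr i))
        = X (Sum.inr j) * (X (Sum.inl i) * X (Sum.inr k) - X (Sum.inl k) * X (Sum.inr i))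
        + X (Sum.inr i) * (X (Sum.inl k) * X (Sum.inr j) - X (Sum.inl j) * X (Sum.inr k)) := by
      ring
    have hX : X (Sum.inl k) * (X (Sum.inl i) * X (Sum.inr j) - X (Sum.inl j) * X (Sum.inr i)) ∈ Q := by
      rw [idX]
      exact Q.add_mem (Ideal.mul_mem_left _ _ hik) (Ideal.mul_mem_left _ _ ih)
    have hY : X (Sum.inr k) * (X (Sum.inl i) * X (Sum.inr j) - X (Sum.inl j) * X (Sum.inr i)) ∈ Q := by
      rw [idY]
      exact Q.add_mem (Ideal.mul_mem_left _ _ hik) (Ideal.mul_mem_left _ _ ih)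
    rcases hQ.mem_or_mem hX with h1 | h1
    · rcases hQ.mem_or_mem hY with h2 | h2
      · exact absurd ⟨h1, h2⟩ hkS
      · exact h2
    · exact h1

lemma PS_SQ_le (G : SimpleGraph V) (Q : Ideal (MvPolynomial (V ⊕ V) K)) (hQ : Q.IsPrime)
    (hedge : ∀ i j, G.Adj i j →
      X (Sum.inl i) * X (Sum.inr j) - X (Sum.inl j) * X (Sum.inr i) ∈ Q) :
    PS K G {v | X (Sum.inl v) ∈ Q ∧ X (Sum.inr v) ∈ Q} ≤ Q := by
  rw [PS, Ideal.span_le]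
  rintro f (⟨v, hv, hf | hf⟩ | ⟨i, j, hr, rfl⟩)
  · subst hf; exact hv.1
  · subst hf; exact hv.2
  · obtain ⟨w⟩ := hr
    exact minor_mem_of_walk G Q hQ hedge i j w

lemma reach_shortcut (G : SimpleGraph V) (S : Set V) {a : V} (hfree : G.IsFreeVertex a) :
    ∀ L : ℕ, ∀ i j : V, i ≠ a → j ≠ a → ∀ w : (delGraph G (S \ {a})).Walk i j,
    w.length ≤ L → (delGraph G S).Reachable i j := by
  intro L
  induction L with
  | zero =>
    intro i j hi hj w hw
    rw [SimpleGraph.Walk.eq_of_length_eq_zero (Nat.le_zero.mp hw)]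
  | succ L ih =>
    intro i j hi hj w hw
    cases w with
    | nil => rfl
    | @cons _ k _ h p =>
      by_cases hk : k = a
      · cases p with
        | nil => exact absurd hk hj
        | @cons _ k₂ _ h₂ p₂ =>
          have hGa1 : G.Adj a i := by rw [← hk]; exact (h.1).symm
          have hGa2 : G.Adj a k₂ := by rw [← hk]; exact h₂.1
          have hk₂a : k₂ ≠ a := fun hh => G.loopless.irrefl a (hh ▸ hGa2)
          have hlen : p₂.length ≤ L := by
            simp only [SimpleGraph.Walk.length_cons] at hw
            omega
          have htail := ih k₂ j hk₂a hj p₂ hlen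
          have hiS : i ∉ S := fun hiS => h.2.1 ⟨hiS, hi⟩
          have hk₂S : k₂ ∉ S := fun hS => h₂.2.2 ⟨hS, hk₂a⟩
          by_cases hik : i = k₂
          · rw [hik]; exact htail
          · have hadj : G.Adj i k₂ := hfree i k₂ hGa1 hGa2 hik
            exact (SimpleGraph.Adj.reachable
              (show (delGraph G S).Adj i k₂ from ⟨hadj, hiS, hk₂S⟩)).trans htail
      · have hiS : i ∉ S := fun hiS => h.2.1 ⟨hiS, hi⟩
        have hkS : k ∉ S := fun hS => h.2.2 ⟨hS, hk⟩
        have hlen : p.length ≤ L := by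
          simp only [SimpleGraph.Walk.length_cons] at hw
          omega
        have htail := ih k j hk hj p hlen
        exact (SimpleGraph.Adj.reachable
          (show (delGraph G S).Adj i k from ⟨h.1, hiS, hkS⟩)).trans htail

lemma free_not_mem (G : SimpleGraph V) {P : Ideal (MvPolynomial (V ⊕ V) K)}
    (hP : P ∈ (binomialEdgeIdeal K G).minimalPrimes) {a : V} (hfree : G.IsFreeVertex a) :
    ¬ (X (Sum.inl a) ∈ P ∧ X (Sum.inr a) ∈ P) := by
  intro haP
  obtain ⟨⟨hPrime, hJP⟩, hmin⟩ := hP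
  have hedge : ∀ i j, G.Adj i j →
      X (Sum.inl i) * X (Sum.inr j) - X (Sum.inl j) * X (Sum.inr i) ∈ P := by
    intro i j hadj
    exact hJP (Ideal.subset_span ⟨i, j, hadj, rfl⟩)
  set S : Set V := {v | X (Sum.inl v) ∈ P ∧ X (Sum.inr v) ∈ P} with hSdef
  have haS : a ∈ S := haP
  have hPSle : PS K G S ≤ P := PS_SQ_le G P hPrime hedge
  have hS'le : PS K G (S \ {a}) ≤ PS K G S := by
    rw [show PS K G (S \ {a}) = Ideal.span _ from rfl, Ideal.span_le]
    rintro f (⟨v, hv, hf | hf⟩ | ⟨i, j, hr, rfl⟩)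
    · subst hf; exact X_inl_mem_PS G S hv.1
    · subst hf; exact X_inr_mem_PS G S hv.1
    · by_cases hij : i = j
      · subst hij; rw [sub_self]; exact Ideal.zero_mem _
      · by_cases hia : i = a
        · subst hia
          apply Ideal.sub_mem
          · exact Ideal.mul_mem_right _ _ (X_inl_mem_PS G S haS)
          · exact Ideal.mul_mem_left _ _ (X_inr_mem_PS G S haS)
        · by_cases hja : j = a
          · subst hja
            apply Ideal.sub_mem
            · exact Ideal.mul_mem_left _ _ (X_inr_mem_PS G S haS)
            · exact Ideal.mul_mem_right _ _ (X_inl_mem_PS G S haS)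
          · obtain ⟨w⟩ := hr
            exact minor_mem_PS G S
              (reach_shortcut G S hfree w.length i j hia hja w le_rfl)
  have hPle : P ≤ PS K G (S \ {a}) :=
    hmin ⟨PS_isPrime G (S \ {a}), J_le_PS G (S \ {a})⟩ (hS'le.trans hPSle)
  exact X_inl_not_mem_PS G (S \ {a}) (fun h => h.2 rfl) (hPle haP.1)

end BEI
end Assemble

section Main
open MvPolynomial BEI

lemma BEI.sum_walk_isLeft {α β : Type*} {G₁ : SimpleGraph α} {G₂ : SimpleGraph β}
    {x y : α ⊕ β} (w : (G₁.sum G₂).Walk x y) : x.isLeft = y.isLeft := by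
  induction w with
  | nil => rfl
  | @cons u v _ h p ih =>
    rw [← ih]
    cases u <;> cases v
    · rfl
    · simp at h
    · simp at h
    · rfl

/-- With `G₁` on `{1, …, n}`, `G₂` on `{n+1, …, n+m}`, `n` free in `G₁` and `n+m` free
in `G₂`, for every minimal prime `P` of `J_{G'}` the ideal `P + (x_n - x_{n+m})` is
prime, where `G' = G₁ ⊔ G₂`. -/
theorem isPrime_minimalPrime_add_x_diff
    {n m : ℕ} (K : Type*) [Field K]
    (G₁ : SimpleGraph (Fin (n + 1))) (G₂ : SimpleGraph (Fin (m + 1)))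
    (h₁ : G₁.IsFreeVertex (Fin.last n)) (h₂ : G₂.IsFreeVertex (Fin.last m)) :
    ∀ P ∈ (binomialEdgeIdeal K (G₁.sum G₂)).minimalPrimes,
      (P + Ideal.span {X (Sum.inl (Sum.inl (Fin.last n))) -
        X (Sum.inl (Sum.inr (Fin.last m)))}).IsPrime := by
  classical
  intro P hP
  set G' := G₁.sum G₂ with hG'
  obtain ⟨⟨hPrime, hJP⟩, hmin⟩ := hP
  have hedge : ∀ i j, G'.Adj i j →
      X (Sum.inl i) * X (Sum.inr j) - X (Sum.inl j) * X (Sum.inr i) ∈ P := by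
    intro i j hadj
    exact hJP (Ideal.subset_span ⟨i, j, hadj, rfl⟩)
  set S : Set (Fin (n + 1) ⊕ Fin (m + 1)) :=
    {v | X (Sum.inl v) ∈ P ∧ X (Sum.inr v) ∈ P} with hS
  have hPSle : PS K G' S ≤ P := PS_SQ_le G' P hPrime hedge
  have hPeq : P = PS K G' S :=
    le_antisymm (hmin ⟨PS_isPrime G' S, J_le_PS G' S⟩ hPSle) hPSle
  set a : Fin (n + 1) ⊕ Fin (m + 1) := Sum.inl (Fin.last n) with hadef
  set b : Fin (n + 1) ⊕ Fin (m + 1) := Sum.inr (Fin.last m) with hbdef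
  have hfa : G'.IsFreeVertex a := by
    rintro (u | u) (w | w) hu hw huw
    · exact h₁ u w hu hw (fun hh => huw (congrArg Sum.inl hh))
    · simp [hG', hadef] at hw
    · simp [hG', hadef] at hu
    · simp [hG', hadef] at hu
  have hfb : G'.IsFreeVertex b := by
    rintro (u | u) (w | w) hu hw huw
    · simp [hG', hbdef] at hu
    · simp [hG', hbdef] at hu
    · simp [hG', hbdef] at hw
    · exact h₂ u w hu hw (fun hh => huw (congrArg Sum.inr hh))
  have ha : a ∉ S := free_not_mem G' ⟨⟨hPrime, hJP⟩, hmin⟩ hfa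
  have hb : b ∉ S := free_not_mem G' ⟨⟨hPrime, hJP⟩, hmin⟩ hfb
  have hle : delGraph G' S ≤ G' := by intro v w h; exact h.1
  have hnr : ¬ (delGraph G' S).Reachable a b := by
    intro hr
    obtain ⟨w⟩ := SimpleGraph.Reachable.mono hle hr
    simpa [hadef, hbdef] using BEI.sum_walk_isLeft w
  rw [hPeq]
  exact PB_isPrime G' S hnr ha hb

end Main
end

section
/- Let $G_1$ be a finite simple graph on vertex set $\{1,\ldots,n\}$ and $G_2$ a finite simple graph on vertex set $\{n+1,\ldots,n+m\}$, and assume that $n$ is a free vertex of $G_1$ and $n+m$ is a free vertex of $G_2$. Let $G' = G_1 \cup G_2$ be their disjoint union and $S' = K[x_1,\ldots,x_{n+m},y_1,\ldots,y_{n+m}]$. Then for every minimal prime $P$ of $J_{G'}$, the element $y_n - y_{n+m}$ does not belong to $P + (x_n - x_{n+m})$. -/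
set_option synthInstance.maxHeartbeats 1000000
set_option maxHeartbeats 1000000

open MvPolynomial

/-- A "sweep": any ring hom from the polynomial ring to a domain `A` that kills the
generators of the binomial edge ideal, and which recovers the quotient map `S → S/P`
after composing with some `ev : A →+* S/P`, must kill all of a minimal prime `P`. -/
lemma binomialEdgeIdeal.sweep {V K : Type*} [Field K] (G : SimpleGraph V)
    {P : Ideal (MvPolynomial (V ⊕ V) K)} (hP : P ∈ (binomialEdgeIdeal K G).minimalPrimes)
    {A : Type*} [CommRing A] [IsDomain A]
    (base : K →+* A) (a : V ⊕ V → A)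
    (ev : A →+* MvPolynomial (V ⊕ V) K ⧸ P)
    (hbase : ∀ r, ev (base r) = Ideal.Quotient.mk P (MvPolynomial.C r))
    (hgen : ∀ i j, G.Adj i j →
      a (Sum.inl i) * a (Sum.inr j) - a (Sum.inl j) * a (Sum.inr i) = 0)
    (heval : ∀ s, ev (a s) = Ideal.Quotient.mk P (X s)) :
    ∀ h ∈ P, eval₂Hom base a h = 0 := by
  have hPp : P.IsPrime := hP.1.1
  have hJP : binomialEdgeIdeal K G ≤ P := hP.1.2
  set Φ : MvPolynomial (V ⊕ V) K →+* A := (eval₂Hom base a : MvPolynomial (V ⊕ V) K →+* A)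
  have hJker : binomialEdgeIdeal K G ≤ RingHom.ker Φ := by
    rw [binomialEdgeIdeal, Ideal.span_le]
    rintro f ⟨i, j, hij, rfl⟩
    have h := hgen i j hij
    simpa [Φ, RingHom.mem_ker] using h
  have hcomp : ev.comp Φ = Ideal.Quotient.mk P := by
    apply MvPolynomial.ringHom_ext
    · intro r; simp [Φ, hbase r]
    · intro s; simp [Φ, heval s]
  have hkerP : RingHom.ker Φ ≤ P := by
    intro h hh
    have h0 : Ideal.Quotient.mk P h = 0 := by
      rw [← hcomp]
      simp only [RingHom.comp_apply, RingHom.mem_ker.mp hh, map_zero]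
    exact Ideal.Quotient.eq_zero_iff_mem.mp h0
  have hker_prime : (RingHom.ker Φ).IsPrime := RingHom.ker_isPrime Φ
  have hle : P ≤ RingHom.ker Φ := hP.2 ⟨hker_prime, hJker⟩ hkerP
  intro h hh
  exact RingHom.mem_ker.mp (hle hh)

lemma binomialEdgeIdeal.rel {V K : Type*} [Field K] {G : SimpleGraph V}
    {P : Ideal (MvPolynomial (V ⊕ V) K)} (hJP : binomialEdgeIdeal K G ≤ P)
    (i j : V) (hij : G.Adj i j) :
    Ideal.Quotient.mk P (X (Sum.inl i)) * Ideal.Quotient.mk P (X (Sum.inr j))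
      = Ideal.Quotient.mk P (X (Sum.inl j)) * Ideal.Quotient.mk P (X (Sum.inr i)) := by
  have hm : (X (Sum.inl i) * X (Sum.inr j) - X (Sum.inl j) * X (Sum.inr i)) ∈ P :=
    hJP (Ideal.subset_span ⟨i, j, hij, rfl⟩)
  have h := Ideal.Quotient.eq_zero_iff_mem.mpr hm
  rw [map_sub, map_mul, map_mul, sub_eq_zero] at h
  exact h

lemma binomialEdgeIdeal.relC {V K : Type*} [Field K] {G : SimpleGraph V}
    {P : Ideal (MvPolynomial (V ⊕ V) K)} (hJP : binomialEdgeIdeal K G ≤ P)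
    (i j : V) (hij : G.Adj i j) :
    Polynomial.C (Ideal.Quotient.mk P (X (Sum.inl i)))
      * Polynomial.C (Ideal.Quotient.mk P (X (Sum.inr j)))
      = Polynomial.C (Ideal.Quotient.mk P (X (Sum.inl j)))
      * Polynomial.C (Ideal.Quotient.mk P (X (Sum.inr i))) := by
  simpa only [map_mul] using congrArg Polynomial.C (binomialEdgeIdeal.rel hJP i j hij)

lemma step1 {V₁ V₂ K : Type*} [Field K] (G : SimpleGraph (V₁ ⊕ V₂))
    (hcross : ∀ u w, ¬ G.Adj (Sum.inl u) (Sum.inr w))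
    {P : Ideal (MvPolynomial ((V₁ ⊕ V₂) ⊕ (V₁ ⊕ V₂)) K)}
    (hP : P ∈ (binomialEdgeIdeal K G).minimalPrimes)
    (v₁ : V₁) (v₂ : V₂) (f : MvPolynomial ((V₁ ⊕ V₂) ⊕ (V₁ ⊕ V₂)) K)
    (h0 : (X (Sum.inr (Sum.inl v₁)) - X (Sum.inr (Sum.inr v₂)))
      - f * (X (Sum.inl (Sum.inl v₁)) - X (Sum.inl (Sum.inr v₂))) ∈ P) :
    X (Sum.inr (Sum.inl v₁)) - MvPolynomial.C (constantCoeff f) * X (Sum.inl (Sum.inl v₁)) ∈ P := by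
  have hPp : P.IsPrime := hP.1.1
  have hJP : binomialEdgeIdeal K G ≤ P := hP.1.2
  haveI := hPp
  set π : MvPolynomial ((V₁ ⊕ V₂) ⊕ (V₁ ⊕ V₂)) K →+*
      MvPolynomial ((V₁ ⊕ V₂) ⊕ (V₁ ⊕ V₂)) K ⧸ P := Ideal.Quotient.mk P with hπdef
  have hrel : ∀ i j, G.Adj i j →
      π (X (Sum.inl i)) * π (X (Sum.inr j)) = π (X (Sum.inl j)) * π (X (Sum.inr i)) := by
    intro i j hij
    have hm : (X (Sum.inl i) * X (Sum.inr j) - X (Sum.inl j) * X (Sum.inr i)) ∈ P :=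
      hJP (Ideal.subset_span ⟨i, j, hij, rfl⟩)
    have h := Ideal.Quotient.eq_zero_iff_mem.mpr hm
    rw [← hπdef, map_sub, map_mul, map_mul, sub_eq_zero] at h
    exact h
  letI : CommRing (Polynomial (Polynomial (MvPolynomial ((V₁ ⊕ V₂) ⊕ (V₁ ⊕ V₂)) K ⧸ P))) :=
    @Polynomial.commRing _ Polynomial.commRing
  have hsw := binomialEdgeIdeal.sweep G hP
    (Polynomial.C.comp (Polynomial.C.comp (π.comp MvPolynomial.C)))
    (fun s => Sum.elim (Sum.elim (fun _ => Polynomial.X) (fun _ => Polynomial.C Polynomial.X))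
        (Sum.elim (fun _ => Polynomial.X) (fun _ => Polynomial.C Polynomial.X)) s
      * Polynomial.C (Polynomial.C (π (X s))))
    ((Polynomial.evalRingHom 1).comp
      (Polynomial.evalRingHom (1 : Polynomial (MvPolynomial ((V₁ ⊕ V₂) ⊕ (V₁ ⊕ V₂)) K ⧸ P))))
    (by intro r; simp [hπdef])
    (by
      intro i j hij
      rcases i with u | u <;> rcases j with w | w
      · have hCC : Polynomial.C (Polynomial.C (π (X (Sum.inl (Sum.inl u)))))
            * Polynomial.C (Polynomial.C (π (X (Sum.inr (Sum.inl w)))))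
            = Polynomial.C (Polynomial.C (π (X (Sum.inl (Sum.inl w)))))
            * Polynomial.C (Polynomial.C (π (X (Sum.inr (Sum.inl u))))) := by
          simpa only [map_mul] using
            congrArg (fun z => Polynomial.C (Polynomial.C z)) (hrel _ _ hij)
        simp only [Sum.elim_inl, Sum.elim_inr]
        linear_combination (Polynomial.X
          : Polynomial (Polynomial (MvPolynomial ((V₁ ⊕ V₂) ⊕ (V₁ ⊕ V₂)) K ⧸ P))) ^ 2 * hCC
      · exact absurd hij (hcross u w)
      · exact absurd hij.symm (hcross w u)
      · have hCC : Polynomial.C (Polynomial.C (π (X (Sum.inl (Sum.inr u)))))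
            * Polynomial.C (Polynomial.C (π (X (Sum.inr (Sum.inr w)))))
            = Polynomial.C (Polynomial.C (π (X (Sum.inl (Sum.inr w)))))
            * Polynomial.C (Polynomial.C (π (X (Sum.inr (Sum.inr u))))) := by
          simpa only [map_mul] using
            congrArg (fun z => Polynomial.C (Polynomial.C z)) (hrel _ _ hij)
        simp only [Sum.elim_inl, Sum.elim_inr]
        linear_combination (Polynomial.C Polynomial.X
          : Polynomial (Polynomial (MvPolynomial ((V₁ ⊕ V₂) ⊕ (V₁ ⊕ V₂)) K ⧸ P))) ^ 2 * hCC)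
    (by intro s; rcases s with (u | u) | (u | u) <;> simp [hπdef])
  have h1 := hsw _ h0
  simp only [map_sub, map_mul, eval₂Hom_X', Sum.elim_inl, Sum.elim_inr] at h1
  obtain ⟨F, hF⟩ : ∃ F, F = (eval₂Hom (Polynomial.C.comp (Polynomial.C.comp (π.comp C))) fun s =>
      Sum.elim (Sum.elim (fun _ => Polynomial.X) fun _ => Polynomial.C Polynomial.X)
          (Sum.elim (fun _ => Polynomial.X) fun _ => Polynomial.C Polynomial.X) s *
        Polynomial.C (Polynomial.C (π (X s)))) f := ⟨_, rfl⟩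
  rw [← hF] at h1
  have h2 := congrArg (⇑(Polynomial.mapRingHom (Polynomial.evalRingHom
      (0 : MvPolynomial ((V₁ ⊕ V₂) ⊕ V₁ ⊕ V₂) K ⧸ P)))) h1
  simp only [map_sub, map_mul, map_zero, Polynomial.coe_mapRingHom, Polynomial.map_mul,
    Polynomial.map_sub, Polynomial.map_X, Polynomial.map_C, Polynomial.coe_evalRingHom,
    Polynomial.eval_X, Polynomial.eval_C, Polynomial.C_0, zero_mul, mul_zero, sub_zero] at h2
  letI : CommRing (@Polynomial (MvPolynomial ((V₁ ⊕ V₂) ⊕ V₁ ⊕ V₂) K ⧸ P) CommSemiring.toSemiring) :=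
    Polynomial.commRing
  haveI : IsDomain (@Polynomial (MvPolynomial ((V₁ ⊕ V₂) ⊕ V₁ ⊕ V₂) K ⧸ P) CommSemiring.toSemiring) :=
    @Polynomial.instIsDomainOfIsCancelAdd _ CommSemiring.toSemiring _ _
  have h3 : Polynomial.C (π (X (Sum.inr (Sum.inl v₁)))) =
      Polynomial.map (Polynomial.evalRingHom 0) F * Polynomial.C (π (X (Sum.inl (Sum.inl v₁)))) :=
    mul_left_cancel₀ Polynomial.X_ne_zero (by linear_combination h2)
  have h4 := congrArg (Polynomial.eval 0) h3
  simp only [Polynomial.eval_C, Polynomial.eval_mul] at h4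
  have hΨ : Polynomial.eval 0 (Polynomial.map (Polynomial.evalRingHom 0) F)
      = π (MvPolynomial.C (constantCoeff f)) := by
    have hext : (Polynomial.evalRingHom (0 : MvPolynomial ((V₁ ⊕ V₂) ⊕ V₁ ⊕ V₂) K ⧸ P)).comp
        ((Polynomial.mapRingHom (Polynomial.evalRingHom 0)).comp
          (eval₂Hom (Polynomial.C.comp (Polynomial.C.comp (π.comp C))) fun s =>
            Sum.elim (Sum.elim (fun _ => Polynomial.X) fun _ => Polynomial.C Polynomial.X)
                (Sum.elim (fun _ => Polynomial.X) fun _ => Polynomial.C Polynomial.X) s *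
              Polynomial.C (Polynomial.C (π (X s)))))
        = π.comp (MvPolynomial.C.comp MvPolynomial.constantCoeff) := by
      apply MvPolynomial.ringHom_ext
      · intro r; simp
      · intro s
        rcases s with (u | u) | (u | u) <;> simp
    have hc := RingHom.congr_fun hext f
    simp only [RingHom.comp_apply] at hc
    rw [← hF] at hc
    simpa using hc
  rw [hΨ] at h4
  have hmem2 : π (X (Sum.inr (Sum.inl v₁)) - MvPolynomial.C (constantCoeff f)
      * X (Sum.inl (Sum.inl v₁))) = 0 := by
    rw [map_sub, map_mul, h4, sub_self]
  exact Ideal.Quotient.eq_zero_iff_mem.mp hmem2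

/-- Step 2: shearing sweep. If `y_v - c x_v ∈ P` for a scalar `c`, then both `x_v` and
`y_v` lie in `P`. -/
lemma step2 {V K : Type*} [Field K] (G : SimpleGraph V)
    {P : Ideal (MvPolynomial (V ⊕ V) K)} (hP : P ∈ (binomialEdgeIdeal K G).minimalPrimes)
    (v : V) (c : K)
    (hq : X (Sum.inr v) - MvPolynomial.C c * X (Sum.inl v) ∈ P) :
    X (Sum.inl v) ∈ P ∧ X (Sum.inr v) ∈ P := by
  have hPp : P.IsPrime := hP.1.1
  have hJP : binomialEdgeIdeal K G ≤ P := hP.1.2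
  haveI := hPp
  set π : MvPolynomial (V ⊕ V) K →+* MvPolynomial (V ⊕ V) K ⧸ P :=
    Ideal.Quotient.mk P with hπdef
  have hsw := binomialEdgeIdeal.sweep G hP
    (Polynomial.C.comp (π.comp MvPolynomial.C))
    (fun s => Sum.elim (fun w => Polynomial.C (π (X (Sum.inl w))))
      (fun w => Polynomial.C (π (X (Sum.inr w))) + Polynomial.C (π (X (Sum.inl w))) * Polynomial.X) s)
    (Polynomial.evalRingHom 0)
    (by intro r; simp [hπdef])
    (by
      intro i j hij
      simp only [Sum.elim_inl, Sum.elim_inr]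
      have hC := binomialEdgeIdeal.relC hJP i j hij
      linear_combination hC)
    (by intro s; rcases s with u | u <;> simp [hπdef])
  have h1 := hsw _ hq
  simp only [map_sub, map_mul, eval₂Hom_X', eval₂Hom_C, Sum.elim_inl, Sum.elim_inr,
    RingHom.comp_apply] at h1
  have h2 := congrArg (fun q => Polynomial.coeff q 1) h1
  simp only [Polynomial.coeff_sub, Polynomial.coeff_add, Polynomial.coeff_C,
    Polynomial.coeff_C_mul, Polynomial.coeff_X_one, Polynomial.coeff_zero,
    one_ne_zero, if_false, mul_one, mul_zero, zero_add, sub_zero] at h2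
  have hx : X (Sum.inl v) ∈ P := by
    rw [← Ideal.Quotient.eq_zero_iff_mem]
    exact h2
  refine ⟨hx, ?_⟩
  have heq : X (Sum.inr v) = (X (Sum.inr v) - MvPolynomial.C c * X (Sum.inl v))
      + MvPolynomial.C c * X (Sum.inl v) := by ring
  rw [heq]
  exact Ideal.add_mem _ hq (Ideal.mul_mem_left _ _ hx)

/-- Step 3: if `v` is a free vertex then `x_v, y_v` cannot both lie in a minimal prime. -/
lemma step3 {V K : Type*} [Field K] [DecidableEq V] (G : SimpleGraph V)
    (v : V) (hfree : G.IsFreeVertex v)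
    {P : Ideal (MvPolynomial (V ⊕ V) K)} (hP : P ∈ (binomialEdgeIdeal K G).minimalPrimes)
    (hx : X (Sum.inl v) ∈ P) (hy : X (Sum.inr v) ∈ P) : False := by
  have hPp : P.IsPrime := hP.1.1
  have hJP : binomialEdgeIdeal K G ≤ P := hP.1.2
  haveI := hPp
  set π : MvPolynomial (V ⊕ V) K →+* MvPolynomial (V ⊕ V) K ⧸ P :=
    Ideal.Quotient.mk P with hπdef
  have hxz : π (X (Sum.inl v)) = 0 := Ideal.Quotient.eq_zero_iff_mem.mpr hx
  have hyz : π (X (Sum.inr v)) = 0 := Ideal.Quotient.eq_zero_iff_mem.mpr hy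
  by_cases hcase : ∀ u, G.Adj v u → X (Sum.inl u) ∈ P
  · -- all neighbors' x-variables in P : move y_v freely
    have hsw := binomialEdgeIdeal.sweep G hP
      (Polynomial.C.comp (π.comp MvPolynomial.C))
      (fun s => if s = Sum.inr v then Polynomial.C (π (X s)) + Polynomial.X
        else Polynomial.C (π (X s)))
      (Polynomial.evalRingHom 0)
      (by intro r; simp [hπdef])
      (by
        intro i j hij
        simp only [reduceCtorEq, if_false]
        by_cases hj : j = v
        · have hi : i ≠ v := by
            intro h; rw [h, hj] at hij; exact G.loopless.irrefl v hij
          have hxi : π (X (Sum.inl i)) = 0 :=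
            Ideal.Quotient.eq_zero_iff_mem.mpr (hcase i (hj ▸ hij).symm)
          simp [hj, hi, hxi, hxz]
        · by_cases hi : i = v
          · have hxj : π (X (Sum.inl j)) = 0 :=
              Ideal.Quotient.eq_zero_iff_mem.mpr (hcase j (hi ▸ hij))
            simp [hi, hj, hxj, hxz]
          · have hC := binomialEdgeIdeal.relC hJP i j hij
            simp only [Sum.inr.injEq, hi, hj, ite_false, if_false]
            linear_combination hC)
      (by
        intro s
        by_cases hs : s = Sum.inr v <;> simp [hs, hπdef])
    have h1 := hsw _ hy
    simp only [eval₂Hom_X'] at h1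
    simp only [reduceIte] at h1
    have h2 := congrArg (fun q => Polynomial.coeff q 1) h1
    simp [Polynomial.coeff_add, Polynomial.coeff_C, Polynomial.coeff_X_one] at h2
  · -- some neighbor u₀ with x_{u₀} ∉ P : move (x_v,y_v) along (x_{u₀},y_{u₀})
    push_neg at hcase
    obtain ⟨u₀, hadj, hu₀⟩ := hcase
    have hsw := binomialEdgeIdeal.sweep G hP
      (Polynomial.C.comp (π.comp MvPolynomial.C))
      (fun s => if s = Sum.inl v then
          Polynomial.C (π (X (Sum.inl v))) + Polynomial.C (π (X (Sum.inl u₀))) * Polynomial.X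
        else if s = Sum.inr v then
          Polynomial.C (π (X (Sum.inr v))) + Polynomial.C (π (X (Sum.inr u₀))) * Polynomial.X
        else Polynomial.C (π (X s)))
      (Polynomial.evalRingHom 0)
      (by intro r; simp [hπdef])
      (by
        intro i j hij
        by_cases hi : i = v
        · have hj : j ≠ v := by
            intro h; rw [hi, h] at hij; exact G.loopless.irrefl v hij
          have hC1 := binomialEdgeIdeal.relC hJP v j (hi ▸ hij)
          simp only [hi, Sum.inl.injEq, Sum.inr.injEq, reduceCtorEq, hj, ite_true, ite_false,
            if_true, if_false, eq_self_iff_true]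
          by_cases hju : j = u₀
          · rw [hju] at hC1 ⊢
            linear_combination hC1
          · have hadj2 : G.Adj u₀ j := hfree u₀ j hadj (hi ▸ hij) (fun h => hju h.symm)
            have hC2 := binomialEdgeIdeal.relC hJP u₀ j hadj2
            linear_combination hC1 + Polynomial.X * hC2
        · by_cases hj : j = v
          · have hC1 := binomialEdgeIdeal.relC hJP i v (hj ▸ hij)
            simp only [hj, Sum.inl.injEq, Sum.inr.injEq, reduceCtorEq, hi, ite_true, ite_false,
              if_true, if_false, eq_self_iff_true]
            by_cases hiu : i = u₀
            · rw [hiu] at hC1 ⊢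
              linear_combination hC1
            · have hadj2 : G.Adj i u₀ := hfree i u₀ (hj ▸ hij).symm hadj hiu
              have hC2 := binomialEdgeIdeal.relC hJP i u₀ hadj2
              linear_combination hC1 + Polynomial.X * hC2
          · have hC := binomialEdgeIdeal.relC hJP i j hij
            simp only [Sum.inl.injEq, Sum.inr.injEq, reduceCtorEq, hi, hj, ite_false, if_false]
            linear_combination hC)
      (by
        intro s
        by_cases hs : s = Sum.inl v
        · simp [hs, hπdef]
        · by_cases hs' : s = Sum.inr v <;> simp [hs, hs', hπdef])
    have h1 := hsw _ hx
    simp only [eval₂Hom_X'] at h1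
    simp only [reduceIte] at h1
    have h2 := congrArg (fun q => Polynomial.coeff q 1) h1
    simp only [Polynomial.coeff_add, Polynomial.coeff_C, Polynomial.coeff_C_mul,
      Polynomial.coeff_X_one, Polynomial.coeff_zero, one_ne_zero, if_false, mul_one,
      zero_add] at h2
    exact hu₀ (Ideal.Quotient.eq_zero_iff_mem.mp h2)

/-- With `G₁` on `{1, …, n}`, `G₂` on `{n+1, …, n+m}`, `n` free in `G₁` and `n+m` free
in `G₂`, for every minimal prime `P` of `J_{G'}` the element `y_n - y_{n+m}` does not
belong to `P + (x_n - x_{n+m})`, where `G' = G₁ ⊔ G₂`. -/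
theorem y_diff_notMem_minimalPrime_add_x_diff
    {n m : ℕ} (K : Type*) [Field K]
    (G₁ : SimpleGraph (Fin (n + 1))) (G₂ : SimpleGraph (Fin (m + 1)))
    (h₁ : G₁.IsFreeVertex (Fin.last n)) (h₂ : G₂.IsFreeVertex (Fin.last m)) :
    ∀ P ∈ (binomialEdgeIdeal K (G₁.sum G₂)).minimalPrimes,
      X (Sum.inr (Sum.inl (Fin.last n))) - X (Sum.inr (Sum.inr (Fin.last m))) ∉
        P + Ideal.span {X (Sum.inl (Sum.inl (Fin.last n))) -
          X (Sum.inl (Sum.inr (Fin.last m)))} := by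
  classical
  intro P hP hmem
  rw [Submodule.add_eq_sup, Submodule.mem_sup] at hmem
  obtain ⟨p, hp, z, hz, hpz⟩ := hmem
  rw [Ideal.mem_span_singleton'] at hz
  obtain ⟨f, rfl⟩ := hz
  have h0 : (X (Sum.inr (Sum.inl (Fin.last n))) - X (Sum.inr (Sum.inr (Fin.last m))))
      - f * (X (Sum.inl (Sum.inl (Fin.last n))) - X (Sum.inl (Sum.inr (Fin.last m)))) ∈ P := by
    have heq : (X (Sum.inr (Sum.inl (Fin.last n))) - X (Sum.inr (Sum.inr (Fin.last m))))
        - f * (X (Sum.inl (Sum.inl (Fin.last n))) - X (Sum.inl (Sum.inr (Fin.last m)))) = p := by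
      rw [← hpz]; ring
    rw [heq]; exact hp
  have hcross : ∀ (u : Fin (n + 1)) (w : Fin (m + 1)),
      ¬ (G₁.sum G₂).Adj (Sum.inl u) (Sum.inr w) := by
    intro u w h
    exact nomatch h
  have hq := step1 (G₁.sum G₂) hcross hP (Fin.last n) (Fin.last m) f h0
  obtain ⟨hxm, hym⟩ := step2 (G₁.sum G₂) hP (Sum.inl (Fin.last n)) (constantCoeff f) hq
  have hfree : (G₁.sum G₂).IsFreeVertex (Sum.inl (Fin.last n)) := by
    intro u w hu hw hne
    rcases u with u | u
    · rcases w with w | w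
      · exact h₁ u w hu hw (fun h => hne (congrArg Sum.inl h))
      · exact nomatch hw
    · exact nomatch hu
  exact step3 (G₁.sum G₂) (Sum.inl (Fin.last n)) hfree hP hxm hym
end
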